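/- arXiv:1802.03289 — 2 statements merged into one kernel-verified Lean document; each statement's English description precedes it below -/
import Mathlib

section
/- Let G = (V, E_1, …, E_N) be an infinite, locally finite, connected, quasi-transitive edge-coloured graph with N colours. For every p ∈ [0,1]^{N−1}: if q < q_ψ(p), then χ(p,q) < ∞. Consequently q_ψ(p) ≤ q_χ(p) for every p ∈ [0,1]^{N−1}. -/
open MeasureTheory ENNReal Set
open scoped Classical

namespace InhomPerc

variable {V : Type*} {N : ℕ}

/-- The edge set of an edge-coloured graph: the union of all colour classes. -/
def Eset (E : Fin N → Set (Sym2 V)) : Set (Sym2 V) := ⋃ i, E i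

/-- The colour classes are mutually disjoint. -/
def DisjointColours (E : Fin N → Set (Sym2 V)) : Prop :=
  ∀ i j : Fin N, i ≠ j → Disjoint (E i) (E j)

/-- Every edge is a pair of two *distinct* vertices. -/
def NoLoops (E : Fin N → Set (Sym2 V)) : Prop := ∀ e ∈ Eset E, ¬ e.IsDiag

/-- The underlying simple graph of the edge-coloured graph. -/
def graph (E : Fin N → Set (Sym2 V)) : SimpleGraph V where
  Adj u v := u ≠ v ∧ s(u, v) ∈ Eset E
  symm := by
    constructor
    intro u v h
    refine ⟨h.1.symm, ?_⟩
    rw [Sym2.eq_swap]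
    exact h.2
  loopless := ⟨fun v h => h.1 rfl⟩

/-- Local finiteness: every vertex lies in finitely many edges. -/
def LocFin (E : Fin N → Set (Sym2 V)) : Prop :=
  ∀ v : V, {e ∈ Eset E | v ∈ e}.Finite

/-- Connectivity of the edge-coloured graph. -/
def ConnectedGraph (E : Fin N → Set (Sym2 V)) : Prop := (graph E).Connected

/-- Quasi-transitivity: the vertices can be partitioned into finitely many classes
such that vertices in the same class are related by a coloured graph automorphism. -/
def QuasiTransitive (E : Fin N → Set (Sym2 V)) : Prop :=
  ∃ (k : ℕ) (c : V → Fin k), ∀ u v : V, c u = c v →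
    ∃ f : V ≃ V, (∀ (i : Fin N) (e : Sym2 V), e ∈ E i ↔ e.map f ∈ E i) ∧ f v = u

/-- Graph distance. -/
noncomputable def dist (E : Fin N → Set (Sym2 V)) (u v : V) : ℕ := (graph E).dist u v

/-- Percolation configurations: each (potential) edge is open (`true`) or closed. -/
abbrev Config (V : Type*) := Sym2 V → Bool

/-- `x` is joined to `y` by a path of open edges all of whose endpoints lie in `S`. -/
def ConnIn (E : Fin N → Set (Sym2 V)) (ω : Config V) (S : Set V) (x y : V) : Prop :=
  Relation.ReflTransGen
    (fun a b => a ∈ S ∧ b ∈ S ∧ s(a, b) ∈ Eset E ∧ ω s(a, b) = true) x y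

/-- The open cluster of `x`. -/
def cluster (E : Fin N → Set (Sym2 V)) (ω : Config V) (x : V) : Set V :=
  {y | ConnIn E ω Set.univ x y}

/-- The retention probability of an edge `e` under the parameter vector `r`:
`r i` for an edge of colour `i`, `0` for non-edges (by disjointness at most one
summand is nonzero). -/
noncomputable def edgeProb (E : Fin N → Set (Sym2 V)) (r : Fin N → ℝ) (e : Sym2 V) : ℝ :=
  ∑ i : Fin N, if e ∈ E i then r i else 0

/-- `P` is the family of inhomogeneous percolation (product) measures: for each valid
parameter vector `r` it is a probability measure whose cylinder probabilities are the
products of the individual edge-retention probabilities. -/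
def IsPercFamily (E : Fin N → Set (Sym2 V)) (P : (Fin N → ℝ) → Measure (Config V)) : Prop :=
  ∀ r : Fin N → ℝ, (∀ i, r i ∈ Icc (0 : ℝ) 1) →
    IsProbabilityMeasure (P r) ∧
    ∀ (F : Finset (Sym2 V)) (σ : Sym2 V → Bool),
      P r {ω | ∀ e ∈ F, ω e = σ e} =
        ∏ e ∈ F, ENNReal.ofReal (if σ e then edgeProb E r e else 1 - edgeProb E r e)

/-- The full parameter vector `(p₁, …, p_{N-1}, q)`. -/
noncomputable def pFull (N : ℕ) (p : Fin (N - 1) → ℝ) (q : ℝ) : Fin N → ℝ :=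
  fun i => if h : (i : ℕ) < N - 1 then p ⟨i, h⟩ else q

/-- The percolation function `θ`. -/
noncomputable def theta (E : Fin N → Set (Sym2 V)) (P : (Fin N → ℝ) → Measure (Config V))
    (r : Fin N → ℝ) : ℝ≥0∞ :=
  ⨆ x : V, P r {ω | (cluster E ω x).Infinite}

/-- The susceptibility `χ`. -/
noncomputable def chi (E : Fin N → Set (Sym2 V)) (P : (Fin N → ℝ) → Measure (Config V))
    (r : Fin N → ℝ) : ℝ≥0∞ :=
  ⨆ x : V, ∫⁻ ω, ((cluster E ω x).encard : ℝ≥0∞) ∂(P r)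

/-- The `θ`-critical surface. -/
noncomputable def qTheta (E : Fin N → Set (Sym2 V)) (P : (Fin N → ℝ) → Measure (Config V))
    (p : Fin (N - 1) → ℝ) : ℝ :=
  sInf (insert (1 : ℝ) {q | q ∈ Icc (0 : ℝ) 1 ∧ 0 < theta E P (pFull N p q)})

/-- The `χ`-critical surface. -/
noncomputable def qChi (E : Fin N → Set (Sym2 V)) (P : (Fin N → ℝ) → Measure (Config V))
    (p : Fin (N - 1) → ℝ) : ℝ :=
  sInf (insert (1 : ℝ) {q | q ∈ Icc (0 : ℝ) 1 ∧ chi E P (pFull N p q) = ⊤})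

/-- `ψ_{p,q}(x,S) = Σᵢ pᵢ Σ_{{y,z} ∈ ΔS ∩ Eᵢ} P(x ↔_S y)` (each boundary edge
is enumerated by its unique orientation `y ∈ S`, `z ∉ S`). -/
noncomputable def psi (E : Fin N → Set (Sym2 V)) (P : (Fin N → ℝ) → Measure (Config V))
    (r : Fin N → ℝ) (x : V) (S : Finset V) : ℝ≥0∞ :=
  ∑ i : Fin N, ENNReal.ofReal (r i) *
    ∑ y ∈ S, ∑' z : V,
      (if z ∉ S ∧ s(y, z) ∈ E i then P r {ω | ConnIn E ω ↑S x y} else 0)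

/-- The `ψ`-critical surface. -/
noncomputable def qPsi (E : Fin N → Set (Sym2 V)) (P : (Fin N → ℝ) → Measure (Config V))
    (p : Fin (N - 1) → ℝ) : ℝ :=
  sSup {q | q ∈ Icc (0 : ℝ) 1 ∧
    ∀ x : V, ∃ S : Finset V, x ∈ S ∧ psi E P (pFull N p q) x S < 1}

/-- The event that `x` is joined by an open path to `∂Λ_k^x` (the set of vertices
at graph distance exactly `k` from `x`). -/
def ConnSphere (E : Fin N → Set (Sym2 V)) (ω : Config V) (x : V) (k : ℕ) : Prop :=
  ∃ y : V, dist E x y = k ∧ ConnIn E ω Set.univ x y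

/-! ### Auxiliary material -/

section Aux

variable {E : Fin N → Set (Sym2 V)}

/-- One open step of percolation inside the vertex set `S`. -/
def Step (E : Fin N → Set (Sym2 V)) (ω : Config V) (S : Set V) (a b : V) : Prop :=
  a ∈ S ∧ b ∈ S ∧ s(a, b) ∈ Eset E ∧ ω s(a, b) = true

lemma connIn_iff_step {ω : Config V} {S : Set V} {x y : V} :
    ConnIn E ω S x y ↔ Relation.ReflTransGen (Step E ω S) x y := Iff.rfl

/-- Walks with a step count. -/
inductive Walk (R : V → V → Prop) : ℕ → V → V → Prop
  | refl (x : V) : Walk R 0 x x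
  | step {x y z : V} {m : ℕ} : R x y → Walk R m y z → Walk R (m + 1) x z

lemma Walk.tail {R : V → V → Prop} {m : ℕ} {x y z : V}
    (h : Walk R m x y) (hyz : R y z) : Walk R (m + 1) x z := by
  induction h with
  | refl => exact Walk.step hyz (Walk.refl _)
  | step h₁ _ ih => exact Walk.step h₁ (ih hyz)

lemma reflTransGen_iff_walk {R : V → V → Prop} {x y : V} :
    Relation.ReflTransGen R x y ↔ ∃ m, Walk R m x y := by
  constructor
  · intro h
    induction h with
    | refl => exact ⟨0, Walk.refl x⟩
    | tail _ hbc ih => exact ⟨ih.choose + 1, ih.choose_spec.tail hbc⟩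
  · rintro ⟨m, h⟩
    induction h with
    | refl => exact Relation.ReflTransGen.refl
    | step h₁ _ ih => exact Relation.ReflTransGen.head h₁ ih

lemma Walk.mono_rel {R R' : V → V → Prop} (hRR : ∀ a b, R a b → R' a b) {m : ℕ} {x y : V}
    (h : Walk R m x y) : Walk R' m x y := by
  induction h with
  | refl => exact Walk.refl _
  | step h₁ _ ih => exact Walk.step (hRR _ _ h₁) ih

/-- "Escape" lemma: a walk starting outside `A` either avoids `A` altogether or hits `A`
 after a positive number of steps. -/
lemma escape {ω : Config V} {A : Set V} {y : V} :
    ∀ {m : ℕ} {w : V}, Walk (Step E ω Set.univ) m w y → w ∉ A →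
      Walk (fun a b => a ∉ A ∧ b ∉ A ∧ Step E ω Set.univ a b) m w y ∨
      ∃ a ∈ A, ∃ j < m, Walk (Step E ω Set.univ) j a y := by
  intro m w h hw
  induction h with
  | refl => exact Or.inl (Walk.refl _)
  | @step x w₂ z m' h₁ h₂ ih =>
    by_cases hw₂ : w₂ ∈ A
    · exact Or.inr ⟨w₂, hw₂, m', Nat.lt_succ_self _, h₂⟩
    · rcases ih hw₂ with h | ⟨a, ha, j, hj, hw⟩
      · exact Or.inl (Walk.step ⟨hw, hw₂, h₁⟩ h)
      · exact Or.inr ⟨a, ha, j, hj.trans (Nat.lt_succ_self _), hw⟩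

/-- Exploration lemma: a walk from a vertex of `A` to a vertex outside `A` must use an
open boundary edge of `S` leaving `A`, followed by a shorter walk avoiding `A`. -/
lemma exploration {ω : Config V} {S A : Set V} (hAS : A ⊆ S)
    (hclosed : ∀ c ∈ A, ∀ w, Step E ω Set.univ c w → w ∈ S → w ∈ A)
    {y : V} (hy : y ∉ A) :
    ∀ m : ℕ, ∀ c ∈ A, Walk (Step E ω Set.univ) m c y →
      ∃ u ∈ A, ∃ v, v ∉ S ∧ s(u, v) ∈ Eset E ∧ ω s(u, v) = true ∧
        ∃ k < m, Walk (fun a b => a ∉ A ∧ b ∉ A ∧ Step E ω Set.univ a b) k v y := by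
  intro m
  induction m using Nat.strong_induction_on with
  | _ m IH =>
  intro c hc hwalk
  cases hwalk with
  | refl => exact absurd hc hy
  | @step _ w _ m' h₁ h₂ =>
    by_cases hw : w ∈ A
    · obtain ⟨u, hu, v, hv, he, ho, k, hk, hwk⟩ := IH m' (Nat.lt_succ_self _) w hw h₂
      exact ⟨u, hu, v, hv, he, ho, k, hk.trans (Nat.lt_succ_self _), hwk⟩
    · have hwS : w ∉ S := fun hwS => hw (hclosed c hc w h₁ hwS)
      rcases escape (E := E) h₂ hw with hoff | ⟨a, ha, j, hj, hwj⟩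
      · exact ⟨c, hc, w, hwS, h₁.2.2.1, h₁.2.2.2, m', Nat.lt_succ_self _, hoff⟩
      · obtain ⟨u, hu, v, hv, he, ho, k, hk, hwk⟩ :=
          IH j (hj.trans (Nat.lt_succ_self _)) a ha hwj
        exact ⟨u, hu, v, hv, he, ho, k,
          hk.trans (hj.trans (Nat.lt_succ_self _)), hwk⟩

end Aux

section Meas

variable {E : Fin N → Set (Sym2 V)} {P : (Fin N → ℝ) → Measure (Config V)}
variable {r : Fin N → ℝ}

/-- Reference configuration attached to a finite set of open edges. -/
noncomputable def extC (T : Finset (Sym2 V)) : Config V := fun e => if e ∈ T then true else false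

/-- `X` depends only on the edges in `F`. -/
def DepOn (X : Set (Config V)) (F : Finset (Sym2 V)) : Prop :=
  ∀ ω ω' : Config V, (∀ e ∈ F, ω e = ω' e) → ω ∈ X → ω' ∈ X

lemma DepOn.mono {X : Set (Config V)} {F F' : Finset (Sym2 V)} (hFF : F ⊆ F')
    (h : DepOn X F) : DepOn X F' :=
  fun ω ω' hag => h ω ω' (fun e he => hag e (hFF he))

lemma DepOn.inter {X Y : Set (Config V)} {F G : Finset (Sym2 V)}
    (hX : DepOn X F) (hY : DepOn Y G) : DepOn (X ∩ Y) (F ∪ G) :=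
  fun ω ω' hag h => ⟨hX ω ω' (fun e he => hag e (Finset.mem_union_left _ he)) h.1,
    hY ω ω' (fun e he => hag e (Finset.mem_union_right _ he)) h.2⟩

/-- Cylinder event. -/
def Cyl (F : Finset (Sym2 V)) (τ : Config V) : Set (Config V) := {ω | ∀ e ∈ F, ω e = τ e}

lemma measurableSet_cyl {F : Finset (Sym2 V)} {τ : Config V} : MeasurableSet (Cyl F τ) := by
  have h : Cyl F τ = ⋂ e ∈ F, (fun ω : Config V => ω e) ⁻¹' {τ e} := by
    ext ω; simp [Cyl]
  rw [h]
  exact MeasurableSet.biInter F.countable_toSet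
    (fun e _ => (measurable_pi_apply e) (measurableSet_singleton _))

lemma depOn_eq_biUnion {X : Set (Config V)} {F : Finset (Sym2 V)} (hX : DepOn X F) :
    X = ⋃ T ∈ F.powerset.filter (fun T => extC T ∈ X), Cyl F (extC T) := by
  ext ω
  simp only [Set.mem_iUnion, Finset.mem_filter, Finset.mem_powerset, exists_prop]
  constructor
  · intro hωX
    refine ⟨F.filter (fun e => ω e = true), ⟨Finset.filter_subset _ _, ?_⟩, ?_⟩
    · refine hX ω _ (fun e he => ?_) hωX
      by_cases hωe : ω e = true
      · simp [extC, Finset.mem_filter, he, hωe]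
      · have : ω e = false := by simpa using hωe
        simp [extC, Finset.mem_filter, he, this, hωe]
    · intro e he
      by_cases hωe : ω e = true
      · simp [extC, Finset.mem_filter, he, hωe]
      · have : ω e = false := by simpa using hωe
        simp [extC, Finset.mem_filter, he, this, hωe]
  · rintro ⟨T, ⟨hTF, hTX⟩, hω⟩
    exact hX (extC T) ω (fun e he => (hω e he).symm) hTX

lemma DepOn.measurableSet {X : Set (Config V)} {F : Finset (Sym2 V)} (hX : DepOn X F) :
    MeasurableSet X := by
  rw [depOn_eq_biUnion hX]
  exact (F.powerset.filter _).measurableSet_biUnion (fun T _ => measurableSet_cyl)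

/-- Edge weights. -/
noncomputable def W (E : Fin N → Set (Sym2 V)) (r : Fin N → ℝ) (e : Sym2 V) (b : Bool) : ℝ≥0∞ :=
  ENNReal.ofReal (if b then edgeProb E r e else 1 - edgeProb E r e)

lemma edgeProb_nonneg (hr : ∀ i, r i ∈ Icc (0:ℝ) 1) (e : Sym2 V) : 0 ≤ edgeProb E r e :=
  Finset.sum_nonneg fun i _ => by
    by_cases h : e ∈ E i <;> simp [h, (hr i).1]

lemma edgeProb_eq_colour (hdisj : DisjointColours E) {e : Sym2 V} {j : Fin N} (he : e ∈ E j) :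
    edgeProb E r e = r j := by
  rw [edgeProb, Finset.sum_eq_single j]
  · simp [he]
  · intro i _ hij
    have : e ∉ E i := fun hei => Set.disjoint_left.mp (hdisj i j hij) hei he
    simp [this]
  · intro h; exact absurd (Finset.mem_univ j) h

lemma edgeProb_le_one (hdisj : DisjointColours E) (hr : ∀ i, r i ∈ Icc (0:ℝ) 1) (e : Sym2 V) :
    edgeProb E r e ≤ 1 := by
  by_cases he : ∃ j, e ∈ E j
  · obtain ⟨j, hj⟩ := he
    rw [edgeProb_eq_colour hdisj hj]; exact (hr j).2
  · push_neg at he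
    have : edgeProb E r e = 0 := Finset.sum_eq_zero fun i _ => by simp [he i]
    simp [this]

lemma W_sum_one (hdisj : DisjointColours E) (hr : ∀ i, r i ∈ Icc (0:ℝ) 1) (e : Sym2 V) :
    W E r e true + W E r e false = 1 := by
  rw [W, W, if_pos rfl, if_neg (by simp), ← ENNReal.ofReal_add (edgeProb_nonneg hr e)
    (by linarith [edgeProb_le_one hdisj hr e])]
  norm_num

/-- The fundamental formula for the probability of a finite-dimensional event. -/
lemma measure_depOn (hP : IsPercFamily E P) (hr : ∀ i, r i ∈ Icc (0:ℝ) 1)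
    {X : Set (Config V)} {F : Finset (Sym2 V)} (hX : DepOn X F) :
    P r X = ∑ T ∈ F.powerset, (if extC T ∈ X then ∏ e ∈ F, W E r e (extC T e) else 0) := by
  have hcylP : ∀ τ : Config V, P r (Cyl F τ) = ∏ e ∈ F, W E r e (τ e) := by
    intro τ
    exact (hP r hr).2 F τ
  have hdisjC : (↑(F.powerset.filter (fun T => extC T ∈ X)) :
      Set (Finset (Sym2 V))).PairwiseDisjoint (fun T => Cyl F (extC T)) := by
    intro T hT T' hT' hne
    simp only [Finset.coe_filter, Set.mem_setOf_eq, Finset.mem_powerset] at hT hT'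
    refine Set.disjoint_left.mpr (fun ω hω hω' => hne ?_)
    apply Finset.ext
    intro e
    by_cases he : e ∈ F
    · have h1 := hω e he
      have h2 := hω' e he
      rw [h1] at h2
      by_cases g1 : e ∈ T <;> by_cases g2 : e ∈ T' <;> simp_all [extC]
    · constructor
      · intro h; exact absurd (hT.1 h) he
      · intro h; exact absurd (hT'.1 h) he
  have hmb := measure_biUnion_finset (μ := P r) hdisjC (fun T _ => measurableSet_cyl)
  rw [← depOn_eq_biUnion hX] at hmb
  rw [hmb, Finset.sum_filter]
  exact Finset.sum_congr rfl fun T _ => by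
    by_cases h : extC T ∈ X <;> simp [h, hcylP]

lemma prob_univ_one (hP : IsPercFamily E P) (hr : ∀ i, r i ∈ Icc (0:ℝ) 1) :
    P r Set.univ = 1 := (hP r hr).1.measure_univ

/-- Independence of events depending on disjoint edge sets. -/
lemma measure_inter_depOn (hP : IsPercFamily E P) (hr : ∀ i, r i ∈ Icc (0:ℝ) 1)
    {X Y : Set (Config V)} {F G : Finset (Sym2 V)}
    (hX : DepOn X F) (hY : DepOn Y G) (hFG : Disjoint F G) :
    P r (X ∩ Y) = P r X * P r Y := by
  have hXY : DepOn (X ∩ Y) (F ∪ G) := hX.inter hY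
  rw [measure_depOn hP hr hXY, measure_depOn hP hr hX, measure_depOn hP hr hY,
    Finset.sum_mul_sum]
  rw [← Finset.sum_product']
  refine Finset.sum_nbij' (fun T => (T ∩ F, T ∩ G)) (fun PQ => PQ.1 ∪ PQ.2) ?_ ?_ ?_ ?_ ?_
  · intro T hT
    simp only [Finset.mem_powerset] at hT
    simp only [Finset.mem_product, Finset.mem_powerset]
    exact ⟨Finset.inter_subset_right, Finset.inter_subset_right⟩
  · intro PQ hPQ
    simp only [Finset.mem_product, Finset.mem_powerset] at hPQ
    simp only [Finset.mem_powerset]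
    exact Finset.union_subset (hPQ.1.trans Finset.subset_union_left)
      (hPQ.2.trans Finset.subset_union_right)
  · intro T hT
    simp only [Finset.mem_powerset] at hT
    show (T ∩ F) ∪ (T ∩ G) = T
    rw [← Finset.inter_union_distrib_left]
    exact Finset.inter_eq_left.mpr hT
  · intro PQ hPQ
    simp only [Finset.mem_product, Finset.mem_powerset] at hPQ
    have h1 : (PQ.1 ∪ PQ.2) ∩ F = PQ.1 := by
      ext e
      simp only [Finset.mem_inter, Finset.mem_union]
      constructor
      · rintro ⟨h | h, hF⟩
        · exact h
        · exact absurd (hPQ.2 h) (Finset.disjoint_left.mp hFG hF)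
      · intro h; exact ⟨Or.inl h, hPQ.1 h⟩
    have h2 : (PQ.1 ∪ PQ.2) ∩ G = PQ.2 := by
      ext e
      simp only [Finset.mem_inter, Finset.mem_union]
      constructor
      · rintro ⟨h | h, hG⟩
        · exact absurd (hPQ.1 h) (Finset.disjoint_right.mp hFG hG)
        · exact h
      · intro h; exact ⟨Or.inr h, hPQ.2 h⟩
    exact Prod.ext h1 h2
  · intro T hT
    simp only [Finset.mem_powerset] at hT
    have hagF : ∀ e ∈ F, extC T e = extC (T ∩ F) e := by
      intro e he
      simp only [extC, Finset.mem_inter, he, and_true]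
    have hagG : ∀ e ∈ G, extC T e = extC (T ∩ G) e := by
      intro e he
      simp only [extC, Finset.mem_inter, he, and_true]
    have hXiff : extC T ∈ X ↔ extC (T ∩ F) ∈ X :=
      ⟨hX _ _ hagF, hX _ _ (fun e he => (hagF e he).symm)⟩
    have hYiff : extC T ∈ Y ↔ extC (T ∩ G) ∈ Y :=
      ⟨hY _ _ hagG, hY _ _ (fun e he => (hagG e he).symm)⟩
    have hprod : ∏ e ∈ F ∪ G, W E r e (extC T e) =
        (∏ e ∈ F, W E r e (extC (T ∩ F) e)) * (∏ e ∈ G, W E r e (extC (T ∩ G) e)) := by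
      rw [Finset.prod_union hFG]
      congr 1
      · exact Finset.prod_congr rfl fun e he => by rw [hagF e he]
      · exact Finset.prod_congr rfl fun e he => by rw [hagG e he]
    by_cases h1 : extC (T ∩ F) ∈ X <;> by_cases h2 : extC (T ∩ G) ∈ Y <;>
      simp [Set.mem_inter_iff, hXiff, hYiff, h1, h2, hprod]

end Meas

section Mono

variable {E : Fin N → Set (Sym2 V)} {P : (Fin N → ℝ) → Measure (Config V)}

/-- Increasing events. -/
def Incr (X : Set (Config V)) : Prop :=
  ∀ ω ω' : Config V, (∀ e, ω e = true → ω' e = true) → ω ∈ X → ω' ∈ X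

lemma ennreal_convex {wf wt w'f w't b t : ℝ≥0∞} (h1 : wf + wt = 1) (h2 : w'f + w't = 1)
    (hw : wt ≤ w't) (hbt : b ≤ t) : wf * b + wt * t ≤ w'f * b + w't * t := by
  have hwt_top : wt ≠ ⊤ := by
    intro h; rw [h] at h1; simp [ENNReal.add_eq_top] at h1
  have hδ : wt + (w't - wt) = w't := add_tsub_cancel_of_le hw
  have hwf : wf = w'f + (w't - wt) := by
    have hcan : wt + wf = wt + (w'f + (w't - wt)) := by
      rw [add_comm wt wf, h1, ← add_assoc wt w'f, add_comm wt w'f, add_assoc, hδ, h2]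
    exact (ENNReal.add_right_inj hwt_top).mp hcan
  calc wf * b + wt * t = w'f * b + ((w't - wt) * b + wt * t) := by
        rw [hwf, add_mul, add_assoc]
    _ ≤ w'f * b + ((w't - wt) * t + wt * t) := by
        gcongr
    _ = w'f * b + w't * t := by
        rw [← add_mul, add_comm (w't - wt) wt, hδ]

lemma sum_weight_mono :
    ∀ (F : Finset (Sym2 V)) (w w' : Sym2 V → Bool → ℝ≥0∞),
    (∀ e ∈ F, w e true + w e false = 1) → (∀ e ∈ F, w' e true + w' e false = 1) →
    (∀ e ∈ F, w e true ≤ w' e true) →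
    ∀ X : Set (Config V), DepOn X F → Incr X →
    (∑ T ∈ F.powerset, if extC T ∈ X then ∏ e ∈ F, w e (extC T e) else 0) ≤
    (∑ T ∈ F.powerset, if extC T ∈ X then ∏ e ∈ F, w' e (extC T e) else 0) := by
  intro F
  induction F using Finset.induction_on with
  | empty => intro w w' _ _ _ X _ _; simp
  | @insert a s ha IH =>
    intro w w' hw1 hw'1 hle X hX hincr
    rw [Finset.sum_powerset_insert ha, Finset.sum_powerset_insert ha]
    -- rewrite the four sums
    set Xf : Set (Config V) := {ω | Function.update ω a false ∈ X} with hXf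
    set Xt : Set (Config V) := {ω | Function.update ω a true ∈ X} with hXt
    have hupdf : ∀ T : Finset (Sym2 V), T ∈ s.powerset →
        Function.update (extC T) a false = extC T := by
      intro T hT
      funext e
      by_cases he : e = a
      · subst he
        have : e ∉ T := fun h => ha (Finset.mem_powerset.mp hT h)
        simp [Function.update, extC, this]
      · simp [Function.update, he]
    have hupdt : ∀ T : Finset (Sym2 V), T ∈ s.powerset →
        Function.update (extC T) a true = extC (insert a T) := by
      intro T hT
      funext e
      by_cases he : e = a
      · subst he; simp [Function.update, extC]
      · simp [Function.update, he, extC, Finset.mem_insert]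
    have hprod_base : ∀ (v : Sym2 V → Bool → ℝ≥0∞) (T : Finset (Sym2 V)), T ∈ s.powerset →
        (∏ e ∈ insert a s, v e (extC T e)) = v a false * ∏ e ∈ s, v e (extC T e) := by
      intro v T hT
      rw [Finset.prod_insert ha]
      have : extC T a = false := by
        have : a ∉ T := fun h => ha (Finset.mem_powerset.mp hT h)
        simp [extC, this]
      rw [this]
    have hprod_top : ∀ (v : Sym2 V → Bool → ℝ≥0∞) (T : Finset (Sym2 V)), T ∈ s.powerset →
        (∏ e ∈ insert a s, v e (extC (insert a T) e)) = v a true * ∏ e ∈ s, v e (extC T e) := by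
      intro v T hT
      rw [Finset.prod_insert ha]
      have h1 : extC (insert a T) a = true := by simp [extC]
      rw [h1]
      congr 1
      refine Finset.prod_congr rfl fun e he => ?_
      have hea : e ≠ a := fun h => ha (h ▸ he)
      simp [extC, Finset.mem_insert, hea]
    have hmemf : ∀ (T : Finset (Sym2 V)), T ∈ s.powerset → (extC T ∈ X ↔ extC T ∈ Xf) := by
      intro T hT
      rw [hXf, Set.mem_setOf_eq, hupdf T hT]
    have hmemt : ∀ (T : Finset (Sym2 V)), T ∈ s.powerset →
        (extC (insert a T) ∈ X ↔ extC T ∈ Xt) := by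
      intro T hT
      rw [hXt, Set.mem_setOf_eq, hupdt T hT]
    have key : ∀ (v : Sym2 V → Bool → ℝ≥0∞),
        ((∑ T ∈ s.powerset, if extC T ∈ X then ∏ e ∈ insert a s, v e (extC T e) else 0) +
         ∑ T ∈ s.powerset, if extC (insert a T) ∈ X then
            ∏ e ∈ insert a s, v e (extC (insert a T) e) else 0) =
        v a false * (∑ T ∈ s.powerset, if extC T ∈ Xf then ∏ e ∈ s, v e (extC T e) else 0) +
        v a true * (∑ T ∈ s.powerset, if extC T ∈ Xt then ∏ e ∈ s, v e (extC T e) else 0) := by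
      intro v
      rw [Finset.mul_sum, Finset.mul_sum]
      congr 1
      · refine Finset.sum_congr rfl fun T hT => ?_
        rw [hprod_base v T hT]
        by_cases h : extC T ∈ X
        · rw [if_pos h, if_pos ((hmemf T hT).mp h)]
        · rw [if_neg h, if_neg (fun hh => h ((hmemf T hT).mpr hh)), mul_zero]
      · refine Finset.sum_congr rfl fun T hT => ?_
        rw [hprod_top v T hT]
        by_cases h : extC (insert a T) ∈ X
        · rw [if_pos h, if_pos ((hmemt T hT).mp h)]
        · rw [if_neg h, if_neg (fun hh => h ((hmemt T hT).mpr hh)), mul_zero]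
    rw [key w, key w']
    -- dependencies and increasingness of the conditioned events
    have hXfs : DepOn Xf s := by
      intro ω ω' hag h
      refine hX _ _ (fun e he => ?_) h
      rcases Finset.mem_insert.mp he with he | he
      · subst he; simp [Function.update]
      · have hea : e ≠ a := fun hh => ha (hh ▸ he)
        simp [Function.update, hea, hag e he]
    have hXts : DepOn Xt s := by
      intro ω ω' hag h
      refine hX _ _ (fun e he => ?_) h
      rcases Finset.mem_insert.mp he with he | he
      · subst he; simp [Function.update]
      · have hea : e ≠ a := fun hh => ha (hh ▸ he)
        simp [Function.update, hea, hag e he]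
    have hXfi : Incr Xf := by
      intro ω ω' hmono h
      refine hincr _ _ (fun e he => ?_) h
      by_cases hea : e = a
      · subst hea; simp_all [Function.update]
      · simp only [Function.update, dif_neg hea] at he ⊢
        exact hmono e he
    have hXti : Incr Xt := by
      intro ω ω' hmono h
      refine hincr _ _ (fun e he => ?_) h
      by_cases hea : e = a
      · subst hea; simp_all [Function.update]
      · simp only [Function.update, dif_neg hea] at he ⊢
        exact hmono e he
    have hsub : ∀ ω, ω ∈ Xf → ω ∈ Xt := by
      intro ω h
      refine hincr _ _ (fun e he => ?_) h
      by_cases hea : e = a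
      · subst hea; simp [Function.update] at he
      · simp only [Function.update, dif_neg hea] at he ⊢
        exact he
    have hws : ∀ e ∈ s, w e true + w e false = 1 := fun e he => hw1 e (Finset.mem_insert_of_mem he)
    have hw's : ∀ e ∈ s, w' e true + w' e false = 1 := fun e he => hw'1 e (Finset.mem_insert_of_mem he)
    have hles : ∀ e ∈ s, w e true ≤ w' e true := fun e he => hle e (Finset.mem_insert_of_mem he)
    have hSBle := IH w w' hws hw's hles Xf hXfs hXfi
    have hSTle := IH w w' hws hw's hles Xt hXts hXti
    have hBT : (∑ T ∈ s.powerset, if extC T ∈ Xf then ∏ e ∈ s, w' e (extC T e) else 0) ≤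
        (∑ T ∈ s.powerset, if extC T ∈ Xt then ∏ e ∈ s, w' e (extC T e) else 0) := by
      refine Finset.sum_le_sum fun T _ => ?_
      by_cases h : extC T ∈ Xf
      · rw [if_pos h, if_pos (hsub _ h)]
      · rw [if_neg h]; exact zero_le
    calc w a false * (∑ T ∈ s.powerset, if extC T ∈ Xf then ∏ e ∈ s, w e (extC T e) else 0) +
          w a true * (∑ T ∈ s.powerset, if extC T ∈ Xt then ∏ e ∈ s, w e (extC T e) else 0)
        ≤ w a false * (∑ T ∈ s.powerset, if extC T ∈ Xf then ∏ e ∈ s, w' e (extC T e) else 0) +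
          w a true * (∑ T ∈ s.powerset, if extC T ∈ Xt then ∏ e ∈ s, w' e (extC T e) else 0) := by
          gcongr
      _ ≤ w' a false * (∑ T ∈ s.powerset, if extC T ∈ Xf then ∏ e ∈ s, w' e (extC T e) else 0) +
          w' a true * (∑ T ∈ s.powerset, if extC T ∈ Xt then ∏ e ∈ s, w' e (extC T e) else 0) := by
          have h1 := hw1 a (Finset.mem_insert_self a s)
          have h2 := hw'1 a (Finset.mem_insert_self a s)
          have h3 := hle a (Finset.mem_insert_self a s)
          calc w a false * _ + w a true * _
              ≤ w' a false * _ + w' a true * _ :=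
                ennreal_convex (by rw [add_comm]; exact h1) (by rw [add_comm]; exact h2) h3 hBT
    
/-- Monotonicity in the parameter vector, for increasing finite-dimensional events. -/
lemma measure_mono_param (hdisj : DisjointColours E) (hP : IsPercFamily E P)
    {r r' : Fin N → ℝ} (hr : ∀ i, r i ∈ Icc (0:ℝ) 1) (hr' : ∀ i, r' i ∈ Icc (0:ℝ) 1)
    (hle : ∀ i, r i ≤ r' i) {X : Set (Config V)} {F : Finset (Sym2 V)}
    (hX : DepOn X F) (hincr : Incr X) : P r X ≤ P r' X := by
  rw [measure_depOn hP hr hX, measure_depOn hP hr' hX]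
  refine sum_weight_mono F (W E r) (W E r') (fun e _ => W_sum_one hdisj hr e)
    (fun e _ => W_sum_one hdisj hr' e) (fun e _ => ?_) X hX hincr
  simp only [W, if_pos]
  apply ENNReal.ofReal_le_ofReal
  refine Finset.sum_le_sum fun i _ => ?_
  by_cases h : e ∈ E i <;> simp [h, hle i]

end Mono

section Events

variable {E : Fin N → Set (Sym2 V)} {P : (Fin N → ℝ) → Measure (Config V)}
variable {r : Fin N → ℝ}

/-- The (finite) neighbourhood of a vertex. -/
noncomputable def nbF (E : Fin N → Set (Sym2 V)) (hlf : LocFin E) (u : V) : Finset V :=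
  (Set.Finite.preimage
    (f := fun w => s(u, w))
    (Function.Injective.injOn (fun w w' h => Sym2.congr_right.mp h))
    (hlf u)).toFinset

lemma mem_nbF {hlf : LocFin E} {u w : V} : w ∈ nbF E hlf u ↔ s(u, w) ∈ Eset E := by
  simp only [nbF, Set.Finite.mem_toFinset, Set.mem_preimage, Set.mem_setOf_eq,
    Sym2.mem_mk_left, and_true]

/-- Finite balls. -/
noncomputable def ballF (E : Fin N → Set (Sym2 V)) (hlf : LocFin E) (x : V) : ℕ → Finset V
  | 0 => {x}
  | n + 1 => ballF E hlf x n ∪ (ballF E hlf x n).biUnion (fun u => nbF E hlf u)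

lemma ballF_subset_succ {hlf : LocFin E} {x : V} {n : ℕ} :
    ballF E hlf x n ⊆ ballF E hlf x (n + 1) := by
  intro u hu; exact Finset.mem_union_left _ hu

lemma ballF_mono {hlf : LocFin E} {x : V} {m n : ℕ} (h : m ≤ n) :
    ballF E hlf x m ⊆ ballF E hlf x n := by
  induction h with
  | refl => exact subset_rfl
  | step _ ih => exact ih.trans ballF_subset_succ

lemma mem_ballF_self {hlf : LocFin E} {x : V} {n : ℕ} : x ∈ ballF E hlf x n := by
  induction n with
  | zero => simp [ballF]
  | succ n ih => exact ballF_subset_succ ih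

lemma ballF_step {hlf : LocFin E} {x u w : V} {n : ℕ} (hu : u ∈ ballF E hlf x n)
    (he : s(u, w) ∈ Eset E) : w ∈ ballF E hlf x (n + 1) :=
  Finset.mem_union_right _ (Finset.mem_biUnion.mpr ⟨u, hu, mem_nbF.mpr he⟩)

/-- Event: `x` is connected to `y` by an open walk of at most `n` steps. -/
def XNe (E : Fin N → Set (Sym2 V)) (x y : V) (n : ℕ) : Set (Config V) :=
  {ω | ∃ m ≤ n, Walk (Step E ω Set.univ) m x y}

/-- Event: `x ↔ y` within `S`. -/
def XC (E : Fin N → Set (Sym2 V)) (S : Finset V) (x y : V) : Set (Config V) :=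
  {ω | ConnIn E ω ↑S x y}

/-- Event: `v ↔ y` by an open walk of at most `n` steps avoiding `A`. -/
def XT (E : Fin N → Set (Sym2 V)) (A : Finset V) (v y : V) (n : ℕ) : Set (Config V) :=
  {ω | ∃ m ≤ n, Walk (fun a b => a ∉ (↑A : Set V) ∧ b ∉ (↑A : Set V) ∧ Step E ω Set.univ a b) m v y}

lemma walk_transport {hlf : LocFin E} {ω ω' : Config V} {x y : V} {n : ℕ}
    (hag : ∀ e ∈ (ballF E hlf x n).sym2.filter (· ∈ Eset E), ω e = ω' e) :
    ∀ m j c, m + j ≤ n → c ∈ ballF E hlf x j → Walk (Step E ω Set.univ) m c y →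
      Walk (Step E ω' Set.univ) m c y := by
  intro m j c hmj hc hwalk
  induction hwalk generalizing j with
  | refl => exact Walk.refl _
  | @step c w z m' h₁ h₂ ih =>
    obtain ⟨-, -, he, ho⟩ := h₁
    have hw : w ∈ ballF E hlf x (j + 1) := ballF_step hc he
    have hcn : c ∈ ballF E hlf x n := ballF_mono (by omega) hc
    have hwn : w ∈ ballF E hlf x n := ballF_mono (by omega) hw
    have hmem : s(c, w) ∈ (ballF E hlf x n).sym2.filter (· ∈ Eset E) := by
      refine Finset.mem_filter.mpr ⟨Finset.mem_sym2_iff.mpr ?_, he⟩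
      intro a ha
      rcases Sym2.mem_iff.mp ha with h | h
      · subst h; exact hcn
      · subst h; exact hwn
    have ho' : ω' s(c, w) = true := (hag _ hmem) ▸ ho
    exact Walk.step ⟨trivial, trivial, he, ho'⟩ (ih (j + 1) (by omega) hw)

lemma XNe_depOn (hlf : LocFin E) {x y : V} {n : ℕ} :
    DepOn (XNe E x y n) ((ballF E hlf x n).sym2.filter (· ∈ Eset E)) := by
  rintro ω ω' hag ⟨m, hm, hwalk⟩
  exact ⟨m, hm, walk_transport hag m 0 x (by omega) mem_ballF_self hwalk⟩

lemma XNe_incr {x y : V} {n : ℕ} : Incr (XNe E x y n) := by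
  rintro ω ω' hmono ⟨m, hm, hwalk⟩
  exact ⟨m, hm, hwalk.mono_rel (fun a b h => ⟨h.1, h.2.1, h.2.2.1, hmono _ h.2.2.2⟩)⟩

lemma XNe_mono_n {x y : V} {n n' : ℕ} (h : n ≤ n') : XNe E x y n ⊆ XNe E x y n' := by
  rintro ω ⟨m, hm, hw⟩; exact ⟨m, hm.trans h, hw⟩

lemma walkA_transport (hlf : LocFin E) {A : Finset V} {ω ω' : Config V} {v : V} {n : ℕ}
    (hag : ∀ e ∈ (ballF E hlf v n).sym2.filter (fun e => e ∈ Eset E ∧ ∀ a ∈ e, a ∉ A), ω e = ω' e)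
    (y : V) :
      ∀ mm cc, Walk (fun a b => a ∉ (↑A : Set V) ∧ b ∉ (↑A : Set V) ∧
        Step E ω Set.univ a b) mm cc y →
      ∀ j, mm + j ≤ n → cc ∈ ballF E hlf v j →
      Walk (fun a b => a ∉ (↑A : Set V) ∧ b ∉ (↑A : Set V) ∧ Step E ω' Set.univ a b) mm cc y := by
    intro mm cc hw
    induction hw with
    | refl => exact fun _ _ _ => Walk.refl _
    | @step c w z m' h₁ h₂ ih =>
      intro j hmj hc
      obtain ⟨haA, hbA, -, -, he, ho⟩ := h₁
      have hww : w ∈ ballF E hlf v (j + 1) := ballF_step hc he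
      have hcn : c ∈ ballF E hlf v n := ballF_mono (by omega) hc
      have hwn : w ∈ ballF E hlf v n := ballF_mono (by omega) hww
      have hmem : s(c, w) ∈ (ballF E hlf v n).sym2.filter
          (fun e => e ∈ Eset E ∧ ∀ a ∈ e, a ∉ A) := by
        refine Finset.mem_filter.mpr ⟨Finset.mem_sym2_iff.mpr ?_, he, ?_⟩
        · intro a ha
          rcases Sym2.mem_iff.mp ha with h | h
          · subst h; exact hcn
          · subst h; exact hwn
        · intro a ha
          rcases Sym2.mem_iff.mp ha with h | h
          · subst h; exact fun hh => haA (Finset.mem_coe.mpr hh)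
          · subst h; exact fun hh => hbA (Finset.mem_coe.mpr hh)
      have ho' : ω' s(c, w) = true := (hag _ hmem) ▸ ho
      exact Walk.step ⟨haA, hbA, trivial, trivial, he, ho'⟩ (ih (j + 1) (by omega) hww)

lemma XT_depOn (hlf : LocFin E) {A : Finset V} {v y : V} {n : ℕ} :
    DepOn (XT E A v y n)
      ((ballF E hlf v n).sym2.filter (fun e => e ∈ Eset E ∧ ∀ a ∈ e, a ∉ A)) := by
  rintro ω ω' hag ⟨m, hm, hwalk⟩
  exact ⟨m, hm, walkA_transport hlf hag y m v hwalk 0 (by omega) mem_ballF_self⟩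

lemma XT_subset_XNe {A : Finset V} {v y : V} {n : ℕ} : XT E A v y n ⊆ XNe E v y n := by
  rintro ω ⟨m, hm, hw⟩
  exact ⟨m, hm, hw.mono_rel (fun a b h => h.2.2)⟩

lemma XC_depOn {S : Finset V} {x y : V} :
    DepOn (XC E S x y) (S.sym2.filter (· ∈ Eset E)) := by
  rintro ω ω' hag h
  induction h with
  | refl => exact Relation.ReflTransGen.refl
  | @tail b u hxb hbu ih =>
    obtain ⟨hbS, huS, he, ho⟩ := hbu
    have hmem : s(b, u) ∈ S.sym2.filter (· ∈ Eset E) := by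
      refine Finset.mem_filter.mpr ⟨Finset.mem_sym2_iff.mpr ?_, he⟩
      intro a ha
      rcases Sym2.mem_iff.mp ha with h | h
      · subst h; exact Finset.mem_coe.mp hbS
      · subst h; exact Finset.mem_coe.mp huS
    exact ih.tail ⟨hbS, huS, he, (hag _ hmem) ▸ ho⟩

lemma XC_incr {S : Finset V} {x y : V} : Incr (XC E S x y) := by
  rintro ω ω' hmono h
  induction h with
  | refl => exact Relation.ReflTransGen.refl
  | tail hxb hbu ih =>
    exact ih.tail ⟨hbu.1, hbu.2.1, hbu.2.2.1, hmono _ hbu.2.2.2⟩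

/-- The event that the open cluster of `x` inside `S` is exactly `A`. -/
def CE (E : Fin N → Set (Sym2 V)) (S : Finset V) (x : V) (A : Finset V) : Set (Config V) :=
  {ω | ∀ u ∈ S, (ConnIn E ω ↑S x u ↔ u ∈ A)}

lemma CE_cover (S : Finset V) (x : V) (ω : Config V) :
    ∃ A ∈ S.powerset, ω ∈ CE E S x A := by
  refine ⟨S.filter (fun u => ConnIn E ω ↑S x u), Finset.mem_powerset.mpr (Finset.filter_subset _ _), ?_⟩
  intro u hu
  simp [Finset.mem_filter, hu]

lemma CE_disjoint {S : Finset V} {x : V} {A A' : Finset V} (hA : A ⊆ S) (hA' : A' ⊆ S)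
    (hne : A ≠ A') : Disjoint (CE E S x A) (CE E S x A') := by
  refine Set.disjoint_left.mpr (fun ω hω hω' => hne ?_)
  apply Finset.ext
  intro u
  constructor
  · intro hu; exact (hω' u (hA hu)).mp ((hω u (hA hu)).mpr hu)
  · intro hu; exact (hω u (hA' hu)).mp ((hω' u (hA' hu)).mpr hu)

lemma CE_mem_x {S : Finset V} {x : V} {A : Finset V} (hx : x ∈ S) {ω : Config V}
    (hω : ω ∈ CE E S x A) : x ∈ A :=
  (hω x hx).mp Relation.ReflTransGen.refl

lemma CE_closed {S : Finset V} {x : V} {A : Finset V} (hA : A ⊆ S) {ω : Config V}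
    (hω : ω ∈ CE E S x A) :
    ∀ c ∈ (↑A : Set V), ∀ w, Step E ω Set.univ c w → w ∈ (↑S : Set V) → w ∈ (↑A : Set V) := by
  intro c hc w hstep hwS
  have hcS : c ∈ S := hA hc
  have hconn : ConnIn E ω ↑S x c := (hω c hcS).mpr hc
  have hconn' : ConnIn E ω ↑S x w :=
    hconn.tail ⟨Finset.mem_coe.mpr hcS, hwS, hstep.2.2.1, hstep.2.2.2⟩
  exact (hω w (Finset.mem_coe.mp hwS)).mp hconn'

lemma CE_depOn {S : Finset V} {x : V} {A : Finset V} (hx : x ∈ S) (hA : A ⊆ S) :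
    DepOn (CE E S x A) (S.sym2.filter (fun e => e ∈ Eset E ∧ ∃ a ∈ A, a ∈ e)) := by
  intro ω ω' hag hω
  have claim1 : ∀ u, ConnIn E ω ↑S x u → u ∈ S → (u ∈ A ∧ ConnIn E ω' ↑S x u) := by
    intro u hconn
    induction hconn with
    | refl => exact fun _ => ⟨CE_mem_x hx hω, Relation.ReflTransGen.refl⟩
    | @tail b u hxb hbu ih =>
      intro huS
      obtain ⟨hbS, huS', he, ho⟩ := hbu
      obtain ⟨hbA, hconn'⟩ := ih (Finset.mem_coe.mp hbS)
      have huA : u ∈ A := (hω u huS).mp (hxb.tail ⟨hbS, huS', he, ho⟩)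
      have hmem : s(b, u) ∈ S.sym2.filter (fun e => e ∈ Eset E ∧ ∃ a ∈ A, a ∈ e) := by
        refine Finset.mem_filter.mpr ⟨Finset.mem_sym2_iff.mpr ?_, he, b, hbA, Sym2.mem_mk_left _ _⟩
        intro a ha
        rcases Sym2.mem_iff.mp ha with h | h
        · subst h; exact Finset.mem_coe.mp hbS
        · subst h; exact Finset.mem_coe.mp huS'
      exact ⟨huA, hconn'.tail ⟨hbS, huS', he, (hag _ hmem) ▸ ho⟩⟩
  have claim2 : ∀ u, ConnIn E ω' ↑S x u → u ∈ S → u ∈ A := by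
    intro u hconn
    induction hconn with
    | refl => exact fun _ => CE_mem_x hx hω
    | @tail b u hxb hbu ih =>
      intro huS
      obtain ⟨hbS, huS', he, ho'⟩ := hbu
      have hbA : b ∈ A := ih (Finset.mem_coe.mp hbS)
      have hmem : s(b, u) ∈ S.sym2.filter (fun e => e ∈ Eset E ∧ ∃ a ∈ A, a ∈ e) := by
        refine Finset.mem_filter.mpr ⟨Finset.mem_sym2_iff.mpr ?_, he, b, hbA, Sym2.mem_mk_left _ _⟩
        intro a ha
        rcases Sym2.mem_iff.mp ha with h | h
        · subst h; exact Finset.mem_coe.mp hbS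
        · subst h; exact Finset.mem_coe.mp huS'
      have ho : ω s(b, u) = true := (hag _ hmem).symm ▸ ho'
      have hconnb : ConnIn E ω ↑S x b := (hω b (Finset.mem_coe.mp hbS)).mpr hbA
      exact (hω u huS).mp (hconnb.tail ⟨hbS, huS', he, ho⟩)
  intro u huS
  constructor
  · intro h; exact claim2 u h huS
  · intro huA
    exact (claim1 u ((hω u huS).mpr huA) huS).2

lemma CE_measurable {S : Finset V} {x : V} {A : Finset V} (hx : x ∈ S) (hA : A ⊆ S) :
    MeasurableSet (CE E S x A) := (CE_depOn hx hA).measurableSet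

/-- Partition of an event according to the cluster of `x` in `S`. -/
lemma measure_partition (hP : IsPercFamily E P) (hr : ∀ i, r i ∈ Icc (0:ℝ) 1)
    {S : Finset V} {x : V} (hx : x ∈ S) {X : Set (Config V)} (hXm : MeasurableSet X) :
    P r X = ∑ A ∈ S.powerset, P r (X ∩ CE E S x A) := by
  have cover : X = ⋃ A ∈ S.powerset, (X ∩ CE E S x A) := by
    ext ω
    simp only [Set.mem_iUnion, Set.mem_inter_iff, exists_prop]
    constructor
    · intro hωX
      obtain ⟨A, hA, hωA⟩ := CE_cover (E := E) S x ω
      exact ⟨A, hA, hωX, hωA⟩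
    · rintro ⟨A, -, h, -⟩; exact h
  have hdisjC : (↑S.powerset : Set (Finset V)).PairwiseDisjoint
      (fun A => X ∩ CE E S x A) := by
    intro A hA A' hA' hne
    simp only [Finset.coe_powerset, Set.mem_preimage, Set.mem_powerset_iff,
      Finset.coe_subset] at hA hA'
    exact ((CE_disjoint (E := E) hA hA' hne).mono Set.inter_subset_right Set.inter_subset_right)
  conv_lhs => rw [cover]
  exact measure_biUnion_finset hdisjC
    (fun A hA => hXm.inter (CE_measurable hx (Finset.mem_powerset.mp hA)))

/-- `P(x ↔_S u)` as a sum over cluster values. -/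
lemma measure_XC_eq_sum (hP : IsPercFamily E P) (hr : ∀ i, r i ∈ Icc (0:ℝ) 1)
    {S : Finset V} {x u : V} (hx : x ∈ S) (hu : u ∈ S) :
    P r (XC E S x u) = ∑ A ∈ S.powerset, (if u ∈ A then P r (CE E S x A) else 0) := by
  rw [measure_partition hP hr hx (XC_depOn (S := S) (x := x) (y := u)).measurableSet]
  refine Finset.sum_congr rfl fun A hA => ?_
  by_cases huA : u ∈ A
  · rw [if_pos huA]
    congr 1
    apply Set.inter_eq_self_of_subset_right
    intro ω hω
    exact (hω u hu).mpr huA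
  · rw [if_neg huA]
    convert measure_empty (μ := P r)
    refine Set.eq_empty_iff_forall_notMem.mpr (fun ω hω => huA ?_)
    exact (hω.2 u hu).mp hω.1

end Events

section Key

variable {E : Fin N → Set (Sym2 V)} {P : (Fin N → ℝ) → Measure (Config V)} {r : Fin N → ℝ}

/-- Neighbours of `u` lying outside `S`. -/
noncomputable def nbOut (E : Fin N → Set (Sym2 V)) (hlf : LocFin E) (S : Finset V) (u : V) :
    Finset V := (nbF E hlf u).filter (· ∉ S)

lemma mem_nbOut {hlf : LocFin E} {S : Finset V} {u v : V} :
    v ∈ nbOut E hlf S u ↔ s(u, v) ∈ Eset E ∧ v ∉ S := by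
  simp [nbOut, mem_nbF]

/-- The probability that a single edge is open. -/
lemma measure_open_edge (hP : IsPercFamily E P) (hr : ∀ i, r i ∈ Icc (0:ℝ) 1) (e : Sym2 V) :
    P r {ω : Config V | ω e = true} = ENNReal.ofReal (edgeProb E r e) := by
  have hdep : DepOn {ω : Config V | ω e = true} {e} := by
    intro ω ω' hag h
    have := hag e (Finset.mem_singleton_self e)
    simp only [Set.mem_setOf_eq] at h ⊢
    rw [← this]; exact h
  rw [measure_depOn hP hr hdep]
  have hps : ({e} : Finset (Sym2 V)).powerset = {∅, {e}} := by
    ext T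
    simp [Finset.subset_singleton_iff]
  rw [hps, Finset.sum_insert (by simpa using (Finset.singleton_ne_empty e).symm)]
  have h1 : extC (∅ : Finset (Sym2 V)) ∉ {ω : Config V | ω e = true} := by
    simp [extC]
  have h2 : extC {e} ∈ {ω : Config V | ω e = true} := by
    simp [extC]
  rw [if_neg h1, Finset.sum_singleton, if_pos h2]
  have h3 : extC {e} e = true := by simp [extC]
  rw [Finset.prod_singleton, h3]
  simp [W]

/-- The key Simon–Lieb type inequality. -/
lemma key_ineq (hP : IsPercFamily E P) (hr : ∀ i, r i ∈ Icc (0:ℝ) 1) (hlf : LocFin E)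
    {S : Finset V} {x y : V} (hx : x ∈ S) (hy : y ∉ S) (n : ℕ) :
    P r (XNe E x y (n + 1)) ≤
      ∑ u ∈ S, P r (XC E S x u) *
        ∑ v ∈ nbOut E hlf S u, ENNReal.ofReal (edgeProb E r s(u, v)) * P r (XNe E v y n) := by
  have hXNm : MeasurableSet (XNe E x y (n + 1)) := (XNe_depOn hlf).measurableSet
  rw [measure_partition hP hr hx hXNm]
  have step2 : ∀ A ∈ S.powerset,
      P r (XNe E x y (n + 1) ∩ CE E S x A) ≤
      P r (CE E S x A) * ∑ u ∈ S, (if u ∈ A then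
        ∑ v ∈ nbOut E hlf S u, ENNReal.ofReal (edgeProb E r s(u, v)) * P r (XNe E v y n)
        else 0) := by
    intro A hApow
    have hA : A ⊆ S := Finset.mem_powerset.mp hApow
    -- inclusion into the union of triple intersections
    have hincl : XNe E x y (n + 1) ∩ CE E S x A ⊆
        ⋃ u ∈ A, ⋃ v ∈ nbOut E hlf S u,
          (CE E S x A ∩ ({ω : Config V | ω s(u, v) = true} ∩ XT E A v y n)) := by
      rintro ω ⟨⟨m, hm, hwalk⟩, hωA⟩
      have hxA : x ∈ (↑A : Set V) := Finset.mem_coe.mpr (CE_mem_x hx hωA)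
      have hyA : y ∉ (↑A : Set V) := fun h => hy (hA (Finset.mem_coe.mp h))
      have hAS : (↑A : Set V) ⊆ ↑S := Finset.coe_subset.mpr hA
      obtain ⟨u, huA, v, hvS, he, ho, k, hk, hwk⟩ :=
        exploration hAS (CE_closed hA hωA) hyA m x hxA hwalk
      have hvnb : v ∈ nbOut E hlf S u := mem_nbOut.mpr ⟨he, fun h => hvS (Finset.mem_coe.mpr h)⟩
      refine Set.mem_biUnion huA ?_
      refine Set.mem_biUnion (Finset.mem_coe.mpr hvnb) ?_
      exact ⟨hωA, ho, k, by omega, hwk⟩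
    have hsub : P r (XNe E x y (n + 1) ∩ CE E S x A) ≤
        ∑ u ∈ A, ∑ v ∈ nbOut E hlf S u,
          P r (CE E S x A ∩ ({ω : Config V | ω s(u, v) = true} ∩ XT E A v y n)) := by
      refine (measure_mono hincl).trans ?_
      refine (measure_biUnion_finset_le _ _).trans ?_
      exact Finset.sum_le_sum fun u _ => measure_biUnion_finset_le _ _
    refine hsub.trans ?_
    have hterm : ∀ u ∈ A, ∀ v ∈ nbOut E hlf S u,
        P r (CE E S x A ∩ ({ω : Config V | ω s(u, v) = true} ∩ XT E A v y n)) ≤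
        P r (CE E S x A) * (ENNReal.ofReal (edgeProb E r s(u, v)) * P r (XNe E v y n)) := by
      intro u huA v hv
      obtain ⟨he, hvS⟩ := mem_nbOut.mp hv
      have hOdep : DepOn {ω : Config V | ω s(u, v) = true} {s(u, v)} := by
        intro ω ω' hag h
        have := hag s(u, v) (Finset.mem_singleton_self _)
        simp only [Set.mem_setOf_eq] at h ⊢
        rw [← this]; exact h
      have hTdep := XT_depOn (A := A) (v := v) (y := y) (n := n) hlf
      have hCdep := CE_depOn (E := E) (S := S) (x := x) hx hA
      have hdisj1 : Disjoint (S.sym2.filter (fun e => e ∈ Eset E ∧ ∃ a ∈ A, a ∈ e))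
          ({s(u, v)} ∪ (ballF E hlf v n).sym2.filter
            (fun e => e ∈ Eset E ∧ ∀ a ∈ e, a ∉ A)) := by
        rw [Finset.disjoint_union_right]
        constructor
        · rw [Finset.disjoint_singleton_right]
          intro hmem
          have := Finset.mem_sym2_iff.mp (Finset.mem_filter.mp hmem).1
          exact hvS (this v (Sym2.mem_mk_right u v))
        · rw [Finset.disjoint_left]
          intro e hmem hmem'
          obtain ⟨-, -, a, haA, hae⟩ := Finset.mem_filter.mp hmem
          obtain ⟨-, -, hnone⟩ := Finset.mem_filter.mp hmem'
          exact hnone a hae haA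
      have hdisj2 : Disjoint ({s(u, v)} : Finset (Sym2 V))
          ((ballF E hlf v n).sym2.filter (fun e => e ∈ Eset E ∧ ∀ a ∈ e, a ∉ A)) := by
        rw [Finset.disjoint_singleton_left]
        intro hmem
        obtain ⟨-, -, hnone⟩ := Finset.mem_filter.mp hmem
        exact hnone u (Sym2.mem_mk_left u v) huA
      rw [measure_inter_depOn hP hr hCdep (hOdep.inter hTdep) hdisj1,
        measure_inter_depOn hP hr hOdep hTdep hdisj2,
        measure_open_edge hP hr]
      exact mul_le_mul_right
        (mul_le_mul_right (measure_mono XT_subset_XNe) _) _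
    calc ∑ u ∈ A, ∑ v ∈ nbOut E hlf S u,
          P r (CE E S x A ∩ ({ω : Config V | ω s(u, v) = true} ∩ XT E A v y n))
        ≤ ∑ u ∈ A, ∑ v ∈ nbOut E hlf S u,
            P r (CE E S x A) * (ENNReal.ofReal (edgeProb E r s(u, v)) * P r (XNe E v y n)) := by
          refine Finset.sum_le_sum fun u hu => Finset.sum_le_sum fun v hv => hterm u hu v hv
      _ = P r (CE E S x A) * ∑ u ∈ A,
            ∑ v ∈ nbOut E hlf S u, ENNReal.ofReal (edgeProb E r s(u, v)) * P r (XNe E v y n) := by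
          rw [Finset.mul_sum]
          exact Finset.sum_congr rfl fun u _ => by rw [Finset.mul_sum]
      _ = P r (CE E S x A) * ∑ u ∈ S, (if u ∈ A then
            ∑ v ∈ nbOut E hlf S u, ENNReal.ofReal (edgeProb E r s(u, v)) * P r (XNe E v y n)
            else 0) := by
          congr 1
          rw [Finset.sum_ite_mem, Finset.inter_eq_right.mpr hA]
  refine (Finset.sum_le_sum step2).trans (le_of_eq ?_)
  set g : V → ℝ≥0∞ := fun u =>
    ∑ v ∈ nbOut E hlf S u, ENNReal.ofReal (edgeProb E r s(u, v)) * P r (XNe E v y n) with hg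
  calc ∑ A ∈ S.powerset, P r (CE E S x A) * ∑ u ∈ S, (if u ∈ A then g u else 0)
      = ∑ A ∈ S.powerset, ∑ u ∈ S, (if u ∈ A then P r (CE E S x A) * g u else 0) := by
        refine Finset.sum_congr rfl fun A _ => ?_
        rw [Finset.mul_sum]
        exact Finset.sum_congr rfl fun u _ => by rw [mul_ite, mul_zero]
    _ = ∑ u ∈ S, ∑ A ∈ S.powerset, (if u ∈ A then P r (CE E S x A) * g u else 0) :=
        Finset.sum_comm
    _ = ∑ u ∈ S, (∑ A ∈ S.powerset, (if u ∈ A then P r (CE E S x A) else 0)) * g u := by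
        refine Finset.sum_congr rfl fun u _ => ?_
        rw [Finset.sum_mul]
        exact Finset.sum_congr rfl fun A _ => by rw [ite_mul, zero_mul]
    _ = ∑ u ∈ S, P r (XC E S x u) * g u := by
        refine Finset.sum_congr rfl fun u hu => ?_
        rw [← measure_XC_eq_sum hP hr hx hu]

end Key

section PsiLemmas

variable {E : Fin N → Set (Sym2 V)} {P : (Fin N → ℝ) → Measure (Config V)} {r : Fin N → ℝ}

lemma ofReal_edgeProb_expand (hr : ∀ i, r i ∈ Icc (0:ℝ) 1) (e : Sym2 V) :
    ENNReal.ofReal (edgeProb E r e) = ∑ i : Fin N, (if e ∈ E i then ENNReal.ofReal (r i) else 0) := by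
  rw [edgeProb, ENNReal.ofReal_sum_of_nonneg (fun i _ => by
    by_cases h : e ∈ E i <;> simp [h, (hr i).1])]
  exact Finset.sum_congr rfl fun i _ => by
    by_cases h : e ∈ E i <;> simp [h]

/-- The boundary sum from the key inequality is at most `ψ(x,S) * c`. -/
lemma boundary_le_psi (hlf : LocFin E) (hr : ∀ i, r i ∈ Icc (0:ℝ) 1)
    {S : Finset V} {x : V} (c : ℝ≥0∞) :
    ∑ u ∈ S, P r (XC E S x u) *
        ∑ v ∈ nbOut E hlf S u, ENNReal.ofReal (edgeProb E r s(u, v)) * c ≤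
      psi E P r x S * c := by
  have hstep : ∀ u ∈ S,
      P r (XC E S x u) * ∑ v ∈ nbOut E hlf S u, ENNReal.ofReal (edgeProb E r s(u, v)) * c =
      ∑ i : Fin N, ∑ v ∈ nbOut E hlf S u,
        (if s(u, v) ∈ E i then ENNReal.ofReal (r i) * (P r (XC E S x u) * c) else 0) := by
    intro u _
    rw [Finset.mul_sum, Finset.sum_comm]
    refine Finset.sum_congr rfl fun v _ => ?_
    rw [ofReal_edgeProb_expand hr, Finset.sum_mul, Finset.mul_sum]
    refine Finset.sum_congr rfl fun i _ => ?_
    by_cases h : s(u, v) ∈ E i <;> simp [h, mul_comm, mul_left_comm, mul_assoc]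
  calc ∑ u ∈ S, P r (XC E S x u) *
        ∑ v ∈ nbOut E hlf S u, ENNReal.ofReal (edgeProb E r s(u, v)) * c
      = ∑ u ∈ S, ∑ i : Fin N, ∑ v ∈ nbOut E hlf S u,
          (if s(u, v) ∈ E i then ENNReal.ofReal (r i) * (P r (XC E S x u) * c) else 0) :=
        Finset.sum_congr rfl hstep
    _ = ∑ i : Fin N, ∑ u ∈ S, ∑ v ∈ nbOut E hlf S u,
          (if s(u, v) ∈ E i then ENNReal.ofReal (r i) * (P r (XC E S x u) * c) else 0) :=
        Finset.sum_comm
    _ ≤ ∑ i : Fin N, (ENNReal.ofReal (r i) *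
          ∑ u ∈ S, ∑' z : V, (if z ∉ S ∧ s(u, z) ∈ E i then P r (XC E S x u) else 0)) * c := by
        refine Finset.sum_le_sum fun i _ => ?_
        rw [mul_assoc, Finset.sum_mul (s := S), Finset.mul_sum]
        refine Finset.sum_le_sum fun u _ => ?_
        have hsum : ∑ v ∈ nbOut E hlf S u,
            (if s(u, v) ∈ E i then ENNReal.ofReal (r i) * (P r (XC E S x u) * c) else 0) =
            ENNReal.ofReal (r i) *
              ((∑ v ∈ nbOut E hlf S u,
                (if v ∉ S ∧ s(u, v) ∈ E i then P r (XC E S x u) else 0)) * c) := by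
          rw [Finset.sum_mul, Finset.mul_sum]
          refine Finset.sum_congr rfl fun v hv => ?_
          obtain ⟨-, hvS⟩ := mem_nbOut.mp hv
          by_cases h : s(u, v) ∈ E i
          · simp [h, hvS]
          · simp [h, hvS]
        rw [hsum]
        refine mul_le_mul_right (mul_le_mul_left ?_ c) _
        refine (ENNReal.sum_le_tsum (f := fun z =>
          (if z ∉ S ∧ s(u, z) ∈ E i then P r (XC E S x u) else 0)) _)
    _ = psi E P r x S * c := by
        rw [psi, Finset.sum_mul]
        rfl

lemma psi_mono_param (hdisj : DisjointColours E) (hP : IsPercFamily E P)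
    {r r' : Fin N → ℝ} (hr : ∀ i, r i ∈ Icc (0:ℝ) 1) (hr' : ∀ i, r' i ∈ Icc (0:ℝ) 1)
    (hle : ∀ i, r i ≤ r' i) (x : V) (S : Finset V) :
    psi E P r x S ≤ psi E P r' x S := by
  refine Finset.sum_le_sum fun i _ => ?_
  refine mul_le_mul' (ENNReal.ofReal_le_ofReal (hle i)) ?_
  refine Finset.sum_le_sum fun y _ => ?_
  refine ENNReal.tsum_le_tsum fun z => ?_
  by_cases h : z ∉ S ∧ s(y, z) ∈ E i
  · rw [if_pos h, if_pos h]
    exact measure_mono_param hdisj hP hr hr' hle XC_depOn XC_incr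
  · rw [if_neg h, if_neg h]

end PsiLemmas

section Map

variable {E : Fin N → Set (Sym2 V)} {P : (Fin N → ℝ) → Measure (Config V)} {r : Fin N → ℝ}

lemma eset_map {f : V ≃ V} (hf : ∀ (i : Fin N) (e : Sym2 V), e ∈ E i ↔ e.map f ∈ E i)
    (e : Sym2 V) : e ∈ Eset E ↔ e.map f ∈ Eset E := by
  simp only [Eset, Set.mem_iUnion]
  exact exists_congr fun i => hf i e

lemma hf_symm {f : V ≃ V} (hf : ∀ (i : Fin N) (e : Sym2 V), e ∈ E i ↔ e.map f ∈ E i) :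
    ∀ (i : Fin N) (e : Sym2 V), e ∈ E i ↔ e.map f.symm ∈ E i := by
  intro i e
  have h := hf i (e.map f.symm)
  have hmm : (e.map f.symm).map f = e := by
    rw [Sym2.map_map]
    have : (↑f ∘ ↑f.symm) = id := by
      funext a; simp
    rw [this, Sym2.map_id]
    rfl
  rw [hmm] at h
  exact h.symm

lemma edgeProb_map {f : V ≃ V} (hf : ∀ (i : Fin N) (e : Sym2 V), e ∈ E i ↔ e.map f ∈ E i)
    (e : Sym2 V) : edgeProb E r (e.map f) = edgeProb E r e := by
  refine Finset.sum_congr rfl fun i _ => ?_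
  by_cases h : e ∈ E i
  · rw [if_pos ((hf i e).mp h), if_pos h]
  · rw [if_neg (fun hh => h ((hf i e).mpr hh)), if_neg h]

lemma measure_map_eq (hP : IsPercFamily E P) (hr : ∀ i, r i ∈ Icc (0:ℝ) 1)
    {f : V ≃ V} (hf : ∀ (i : Fin N) (e : Sym2 V), e ∈ E i ↔ e.map f ∈ E i)
    {F : Finset (Sym2 V)} {X X' : Set (Config V)}
    (hX : DepOn X F) (hX' : DepOn X' (F.image (Sym2.map f)))
    (hcorr : ∀ T ∈ F.powerset, (extC T ∈ X ↔ extC (T.image (Sym2.map f)) ∈ X')) :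
    P r X' = P r X := by
  have hinj : Function.Injective (Sym2.map (f : V → V)) := Sym2.map.injective f.injective
  rw [measure_depOn hP hr hX', measure_depOn hP hr hX]
  refine Finset.sum_nbij' (i := fun T' => F.filter (fun e => Sym2.map f e ∈ T'))
    (j := fun T => T.image (Sym2.map f)) ?_ ?_ ?_ ?_ ?_
  · intro T' _
    exact Finset.mem_powerset.mpr (Finset.filter_subset _ _)
  · intro T hT
    exact Finset.mem_powerset.mpr
      (Finset.image_subset_image (Finset.mem_powerset.mp hT))
  · intro T' hT'
    have hsub := Finset.mem_powerset.mp hT'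
    ext e'
    simp only [Finset.mem_image, Finset.mem_filter]
    constructor
    · rintro ⟨e, ⟨-, he⟩, rfl⟩; exact he
    · intro he'
      obtain ⟨e, heF, rfl⟩ := Finset.mem_image.mp (hsub he')
      exact ⟨e, ⟨heF, he'⟩, rfl⟩
  · intro T hT
    have hsub := Finset.mem_powerset.mp hT
    ext e
    simp only [Finset.mem_filter, Finset.mem_image]
    constructor
    · rintro ⟨heF, e₀, he₀T, heq⟩
      rwa [← hinj heq]
    · intro heT
      exact ⟨hsub heT, e, heT, rfl⟩
  · intro T' hT'
    have hsub := Finset.mem_powerset.mp hT'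
    set T := F.filter (fun e => Sym2.map f e ∈ T') with hTdef
    have himg : T.image (Sym2.map f) = T' := by
      ext e'
      simp only [Finset.mem_image, Finset.mem_filter, hTdef]
      constructor
      · rintro ⟨e, ⟨-, he⟩, rfl⟩; exact he
      · intro he'
        obtain ⟨e, heF, rfl⟩ := Finset.mem_image.mp (hsub he')
        exact ⟨e, ⟨heF, he'⟩, rfl⟩
    have hTF : T ∈ F.powerset := Finset.mem_powerset.mpr (Finset.filter_subset _ _)
    have hiff := hcorr T hTF
    rw [himg] at hiff
    have hprod : ∏ e' ∈ F.image (Sym2.map f), W E r e' (extC T' e') =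
        ∏ e ∈ F, W E r e (extC T e) := by
      rw [Finset.prod_image (fun a _ b _ h => hinj h)]
      refine Finset.prod_congr rfl fun e heF => ?_
      have hb : extC T' (Sym2.map f e) = extC T e := by
        simp only [extC, hTdef, Finset.mem_filter]
        by_cases h : Sym2.map f e ∈ T' <;> simp [h, heF]
      rw [hb]
      simp only [W, edgeProb_map hf]
    by_cases h : extC T ∈ X
    · rw [if_pos h, if_pos (hiff.mp h), hprod]
    · rw [if_neg h, if_neg (fun hh => h (hiff.mpr hh))]

lemma connIn_map {f : V ≃ V} (hf : ∀ (i : Fin N) (e : Sym2 V), e ∈ E i ↔ e.map f ∈ E i)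
    {ω ω' : Config V} (hω : ∀ e, ω' (Sym2.map f e) = ω e) {S : Set V} {x y : V}
    (h : ConnIn E ω S x y) : ConnIn E ω' (f '' S) (f x) (f y) := by
  induction h with
  | refl => exact Relation.ReflTransGen.refl
  | @tail b u hxb hbu ih =>
    obtain ⟨hbS, huS, he, ho⟩ := hbu
    refine ih.tail ⟨Set.mem_image_of_mem f hbS, Set.mem_image_of_mem f huS, ?_, ?_⟩
    · rw [← Sym2.map_pair_eq]
      exact (eset_map hf _).mp he
    · rw [← Sym2.map_pair_eq, hω]
      exact ho

/-- The connectivity probabilities are invariant under colour-preserving automorphisms. -/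
lemma measure_XC_map (hP : IsPercFamily E P) (hr : ∀ i, r i ∈ Icc (0:ℝ) 1)
    {f : V ≃ V} (hf : ∀ (i : Fin N) (e : Sym2 V), e ∈ E i ↔ e.map f ∈ E i)
    (S : Finset V) (x y : V) :
    P r (XC E (S.image f) (f x) (f y)) = P r (XC E S x y) := by
  have hinj : Function.Injective (Sym2.map (f : V → V)) := Sym2.map.injective f.injective
  have himg : (S.image f).sym2.filter (· ∈ Eset E) =
      (S.sym2.filter (· ∈ Eset E)).image (Sym2.map f) := by
    refine Finset.ext fun e' => ?_
    induction e' using Sym2.ind with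
    | _ c d =>
      simp only [Finset.mem_filter, Finset.mem_image, Finset.mem_sym2_iff]
      constructor
      · rintro ⟨hmem, hE⟩
        obtain ⟨c₀, hc₀, rfl⟩ := hmem c (by simp [Sym2.mem_iff])
        obtain ⟨d₀, hd₀, rfl⟩ := hmem d (by simp [Sym2.mem_iff])
        refine ⟨s(c₀, d₀), ⟨?_, ?_⟩, Sym2.map_pair_eq f c₀ d₀⟩
        · intro a ha
          rcases Sym2.mem_iff.mp ha with h | h
          · subst h; exact hc₀
          · subst h; exact hd₀
        · rw [eset_map hf, Sym2.map_pair_eq]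
          exact hE
      · rintro ⟨e, ⟨hmem, hE⟩, heq⟩
        constructor
        · intro a ha
          rw [← heq] at ha
          obtain ⟨a₀, ha₀, rfl⟩ := Sym2.mem_map.mp ha
          exact ⟨a₀, hmem a₀ ha₀, rfl⟩
        · rw [← heq, ← eset_map hf]
          exact hE
  refine measure_map_eq hP hr hf (F := S.sym2.filter (· ∈ Eset E))
    (X := XC E S x y) XC_depOn ?_ ?_
  · rw [← himg]
    exact XC_depOn
  · intro T hT
    constructor
    · intro h
      have hω : ∀ e, extC (T.image (Sym2.map f)) (Sym2.map f e) = extC T e := by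
        intro e
        simp only [extC]
        by_cases he : e ∈ T
        · rw [if_pos (Finset.mem_image_of_mem _ he), if_pos he]
        · rw [if_neg (fun hh => ?_), if_neg he]
          obtain ⟨e₀, he₀, heq⟩ := Finset.mem_image.mp hh
          exact he (hinj heq ▸ he₀)
      have := connIn_map hf hω (S := ↑S) h
      rwa [← Finset.coe_image] at this
    · intro h
      have hω : ∀ e, extC T (Sym2.map f.symm e) = extC (T.image (Sym2.map f)) e := by
        intro e
        simp only [extC]
        by_cases he : e ∈ T.image (Sym2.map f)
        · obtain ⟨e₀, he₀, rfl⟩ := Finset.mem_image.mp he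
          have : Sym2.map (↑f.symm) (Sym2.map (↑f) e₀) = e₀ := by
            rw [Sym2.map_map]
            have : (↑f.symm ∘ ↑f) = id := by funext a; simp
            rw [this, Sym2.map_id]
            rfl
          rw [this, if_pos he₀, if_pos he]
        · rw [if_neg he, if_neg (fun hh => he ?_)]
          refine Finset.mem_image.mpr ⟨Sym2.map (↑f.symm) e, hh, ?_⟩
          rw [Sym2.map_map]
          have : (↑f ∘ ↑f.symm) = id := by funext a; simp
          rw [this, Sym2.map_id]
          rfl
      have := connIn_map (hf_symm hf) hω (S := ↑(S.image f)) h
      have himgS : (↑f.symm) '' ↑(S.image f) = (↑S : Set V) := by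
        rw [Finset.coe_image, ← Set.image_comp]
        have : (↑f.symm ∘ ↑f) = id := by funext a; simp
        rw [this, Set.image_id]
      rw [himgS, Equiv.symm_apply_apply, Equiv.symm_apply_apply] at this
      exact this

/-- `ψ` is invariant under colour-preserving automorphisms. -/
lemma psi_map (hP : IsPercFamily E P) (hr : ∀ i, r i ∈ Icc (0:ℝ) 1)
    {f : V ≃ V} (hf : ∀ (i : Fin N) (e : Sym2 V), e ∈ E i ↔ e.map f ∈ E i)
    (x : V) (S : Finset V) :
    psi E P r (f x) (S.image f) = psi E P r x S := by
  refine Finset.sum_congr rfl fun i _ => ?_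
  congr 1
  rw [Finset.sum_image (fun a _ b _ h => f.injective h)]
  refine Finset.sum_congr rfl fun y hy => ?_
  rw [← Equiv.tsum_eq f (fun z => if z ∉ S.image f ∧ s(f y, z) ∈ E i then
    P r {ω | ConnIn E ω ↑(S.image f) (f x) (f y)} else 0)]
  refine tsum_congr fun z => ?_
  have hcond : (f z ∉ S.image f ∧ s(f y, f z) ∈ E i) ↔ (z ∉ S ∧ s(y, z) ∈ E i) := by
    constructor
    · rintro ⟨h1, h2⟩
      refine ⟨fun hz => h1 (Finset.mem_image_of_mem f hz), ?_⟩
      rw [← Sym2.map_pair_eq] at h2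
      exact (hf i _).mpr h2
    · rintro ⟨h1, h2⟩
      refine ⟨fun hz => ?_, ?_⟩
      · obtain ⟨z₀, hz₀, heq⟩ := Finset.mem_image.mp hz
        exact h1 (f.injective heq ▸ hz₀)
      · rw [← Sym2.map_pair_eq]
        exact (hf i _).mp h2
  by_cases h : z ∉ S ∧ s(y, z) ∈ E i
  · rw [if_pos (hcond.mpr h), if_pos h]
    exact measure_XC_map hP hr hf S x y
  · rw [if_neg (fun hh => h (hcond.mp hh)), if_neg h]

end Map

section Chi

variable {E : Fin N → Set (Sym2 V)} {P : (Fin N → ℝ) → Measure (Config V)} {r : Fin N → ℝ}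

lemma conn_eq_iUnion {x y : V} :
    {ω : Config V | ConnIn E ω Set.univ x y} = ⋃ n, XNe E x y n := by
  ext ω
  simp only [Set.mem_setOf_eq, Set.mem_iUnion]
  constructor
  · intro h
    obtain ⟨m, hw⟩ := reflTransGen_iff_walk.mp h
    exact ⟨m, m, le_rfl, hw⟩
  · rintro ⟨n, m, _, hw⟩
    exact reflTransGen_iff_walk.mpr ⟨m, hw⟩

lemma conn_measurable (hlf : LocFin E) {x y : V} :
    MeasurableSet {ω : Config V | ConnIn E ω Set.univ x y} := by
  rw [conn_eq_iUnion]
  exact MeasurableSet.iUnion fun n => (XNe_depOn hlf).measurableSet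

lemma measure_conn_eq_iSup (hlf : LocFin E) {x y : V} :
    P r {ω : Config V | ConnIn E ω Set.univ x y} = ⨆ n, P r (XNe E x y n) := by
  rw [conn_eq_iUnion]
  exact Directed.measure_iUnion ((monotone_nat_of_le_succ
    (fun n => XNe_mono_n (Nat.le_succ n))).directed_le)

lemma encard_cast_eq_tsum (s : Set V) :
    ((s.encard : ℕ∞) : ℝ≥0∞) = ∑' y : V, (if y ∈ s then (1 : ℝ≥0∞) else 0) := by
  rcases s.finite_or_infinite with hfin | hinf
  · rw [hfin.encard_eq_coe_toFinset_card, ENat.toENNReal_coe]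
    rw [tsum_eq_sum (s := hfin.toFinset) (fun y hy => by
      rw [if_neg (fun h => hy (hfin.mem_toFinset.mpr h))])]
    rw [Finset.sum_congr rfl (fun y hy => if_pos (hfin.mem_toFinset.mp hy))]
    simp
  · rw [hinf.encard_eq, ENat.toENNReal_top]
    by_contra hne
    have hlt : (∑' y : V, (if y ∈ s then (1 : ℝ≥0∞) else 0)) < ⊤ :=
      lt_top_iff_ne_top.mpr (fun h => hne h.symm)
    obtain ⟨n, hn⟩ := ENNReal.exists_nat_gt hlt.ne
    obtain ⟨t, hts, htcard⟩ := hinf.exists_subset_card_eq n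
    have : (n : ℝ≥0∞) ≤ ∑' y : V, (if y ∈ s then (1 : ℝ≥0∞) else 0) := by
      calc (n : ℝ≥0∞) = ∑ y ∈ t, (if y ∈ s then (1 : ℝ≥0∞) else 0) := by
            rw [Finset.sum_congr rfl (fun y hy => if_pos (hts hy))]
            simp [htcard]
        _ ≤ _ := ENNReal.sum_le_tsum t
    exact absurd (this.trans_lt hn) (lt_irrefl _)

/-- The main susceptibility bound from a uniform family of good finite sets. -/
lemma chi_le_of_uniform [Countable V] (hP : IsPercFamily E P)
    (hr : ∀ i, r i ∈ Icc (0:ℝ) 1) (hlf : LocFin E)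
    (M : ℕ) (hM1 : 1 ≤ M) (δ : ℝ≥0∞) (hδ : δ < 1)
    (Sx : V → Finset V) (hxS : ∀ x, x ∈ Sx x) (hcard : ∀ x, (Sx x).card ≤ M)
    (hψ : ∀ x, psi E P r x (Sx x) ≤ δ) :
    chi E P r ≤ (M : ℝ≥0∞) * (1 - δ)⁻¹ := by
  haveI : IsProbabilityMeasure (P r) := (hP r hr).1
  set Gf : ℕ → ℝ≥0∞ :=
    fun n => ⨆ x : V, ⨆ T : Finset V, ∑ y ∈ T, P r (XNe E x y n) with hGf
  have hGle : ∀ n x (T : Finset V), (∑ y ∈ T, P r (XNe E x y n)) ≤ Gf n := by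
    intro n x T
    exact le_iSup_of_le x (le_iSup_of_le T le_rfl)
  have claim0 : Gf 0 ≤ 1 := by
    refine iSup_le fun x => iSup_le fun T => ?_
    calc ∑ y ∈ T, P r (XNe E x y 0)
        ≤ ∑ y ∈ T, (if y = x then 1 else 0) := by
          refine Finset.sum_le_sum fun y _ => ?_
          by_cases h : y = x
          · rw [if_pos h]; exact prob_le_one
          · rw [if_neg h]
            have hempty : XNe E x y 0 = ∅ := by
              refine Set.eq_empty_iff_forall_notMem.mpr ?_
              rintro ω ⟨m, hm, hw⟩
              interval_cases m
              cases hw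
              exact h rfl
            rw [hempty]
            simp
      _ ≤ 1 := by
          rw [Finset.sum_ite_eq' T x (fun _ => (1:ℝ≥0∞))]
          by_cases h : x ∈ T <;> simp [h]
  have claimStep : ∀ n, Gf (n + 1) ≤ (M : ℝ≥0∞) + δ * Gf n := by
    intro n
    refine iSup_le fun x => iSup_le fun T => ?_
    rw [← Finset.sum_filter_add_sum_filter_not T (· ∈ Sx x)]
    have hfirst : ∑ y ∈ T.filter (· ∈ Sx x), P r (XNe E x y (n + 1)) ≤ (M : ℝ≥0∞) := by
      calc ∑ y ∈ T.filter (· ∈ Sx x), P r (XNe E x y (n + 1))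
          ≤ ∑ _y ∈ T.filter (· ∈ Sx x), (1 : ℝ≥0∞) :=
            Finset.sum_le_sum fun y _ => prob_le_one
        _ = ((T.filter (· ∈ Sx x)).card : ℝ≥0∞) := by simp
        _ ≤ ((Sx x).card : ℝ≥0∞) := by
            exact_mod_cast Nat.cast_le.mpr (Finset.card_le_card
              (fun y hy => (Finset.mem_filter.mp hy).2))
        _ ≤ (M : ℝ≥0∞) := Nat.cast_le.mpr (hcard x)
    have hsecond : ∑ y ∈ T.filter (· ∉ Sx x), P r (XNe E x y (n + 1)) ≤ δ * Gf n := by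
      calc ∑ y ∈ T.filter (· ∉ Sx x), P r (XNe E x y (n + 1))
          ≤ ∑ y ∈ T.filter (· ∉ Sx x), ∑ u ∈ Sx x, P r (XC E (Sx x) x u) *
              ∑ v ∈ nbOut E hlf (Sx x) u,
                ENNReal.ofReal (edgeProb E r s(u, v)) * P r (XNe E v y n) := by
            refine Finset.sum_le_sum fun y hy => ?_
            exact key_ineq hP hr hlf (hxS x) (Finset.mem_filter.mp hy).2 n
        _ = ∑ u ∈ Sx x, P r (XC E (Sx x) x u) *
              ∑ v ∈ nbOut E hlf (Sx x) u, ENNReal.ofReal (edgeProb E r s(u, v)) *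
                ∑ y ∈ T.filter (· ∉ Sx x), P r (XNe E v y n) := by
            rw [Finset.sum_comm]
            refine Finset.sum_congr rfl fun u _ => ?_
            rw [← Finset.mul_sum]
            congr 1
            rw [Finset.sum_comm]
            refine Finset.sum_congr rfl fun v _ => ?_
            rw [← Finset.mul_sum]
        _ ≤ ∑ u ∈ Sx x, P r (XC E (Sx x) x u) *
              ∑ v ∈ nbOut E hlf (Sx x) u, ENNReal.ofReal (edgeProb E r s(u, v)) * Gf n := by
            refine Finset.sum_le_sum fun u _ => mul_le_mul_right ?_ _
            refine Finset.sum_le_sum fun v _ => mul_le_mul_right ?_ _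
            exact hGle n v _
        _ ≤ psi E P r x (Sx x) * Gf n := boundary_le_psi hlf hr (Gf n)
        _ ≤ δ * Gf n := mul_le_mul_left (hψ x) _
    exact add_le_add hfirst hsecond
  have h1δ : (1 : ℝ≥0∞) - δ ≠ 0 := by
    have : 0 < 1 - δ := tsub_pos_iff_lt.mpr hδ
    exact this.ne'
  have h1δtop : (1 : ℝ≥0∞) - δ ≠ ⊤ := by
    exact (lt_of_le_of_lt tsub_le_self one_lt_top).ne
  have claimBound : ∀ n, Gf n ≤ (M : ℝ≥0∞) * (1 - δ)⁻¹ := by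
    intro n
    induction n with
    | zero =>
      refine claim0.trans ?_
      calc (1 : ℝ≥0∞) = 1 * 1 := (one_mul 1).symm
        _ ≤ (M : ℝ≥0∞) * (1 - δ)⁻¹ := by
            refine mul_le_mul' (by exact_mod_cast hM1) ?_
            have hh := ENNReal.inv_le_inv.mpr (tsub_le_self : (1:ℝ≥0∞) - δ ≤ 1)
            rwa [inv_one] at hh
    | succ n ih =>
      refine (claimStep n).trans ?_
      have hc : ((1:ℝ≥0∞) - δ) * (1 - δ)⁻¹ = 1 := ENNReal.mul_inv_cancel h1δ h1δtop
      have hsum : ((1:ℝ≥0∞) - δ) + δ = 1 := tsub_add_cancel_of_le hδ.le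
      calc (M : ℝ≥0∞) + δ * Gf n
          ≤ (M : ℝ≥0∞) + δ * ((M : ℝ≥0∞) * (1 - δ)⁻¹) := add_le_add_right (mul_le_mul_right ih _) _
        _ = (M : ℝ≥0∞) * (((1:ℝ≥0∞) - δ) * (1 - δ)⁻¹) + (M:ℝ≥0∞) * (δ * (1 - δ)⁻¹) := by
            rw [hc, mul_one]; ring
        _ = (M : ℝ≥0∞) * ((((1:ℝ≥0∞) - δ) + δ) * (1 - δ)⁻¹) := by ring
        _ = (M : ℝ≥0∞) * (1 - δ)⁻¹ := by rw [hsum, one_mul]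
  -- from Gf to χ
  have hsum_conn : ∀ (x : V) (T : Finset V),
      (∑ y ∈ T, P r {ω : Config V | ConnIn E ω Set.univ x y}) ≤ (M : ℝ≥0∞) * (1 - δ)⁻¹ := by
    intro x T
    calc ∑ y ∈ T, P r {ω : Config V | ConnIn E ω Set.univ x y}
        = ∑ y ∈ T, ⨆ n, P r (XNe E x y n) :=
          Finset.sum_congr rfl fun y _ => measure_conn_eq_iSup hlf
      _ = ⨆ n, ∑ y ∈ T, P r (XNe E x y n) :=
          ENNReal.finsetSum_iSup_of_monotone fun y n n' hnn => measure_mono (XNe_mono_n hnn)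
      _ ≤ ⨆ n, Gf n := iSup_mono fun n => hGle n x T
      _ ≤ (M : ℝ≥0∞) * (1 - δ)⁻¹ := iSup_le claimBound
  rw [chi]
  refine iSup_le fun x => ?_
  have hpt : ∀ ω : Config V, ((cluster E ω x).encard : ℝ≥0∞) =
      ∑' y : V, (if ConnIn E ω Set.univ x y then (1:ℝ≥0∞) else 0) := by
    intro ω
    rw [encard_cast_eq_tsum]
    rfl
  calc ∫⁻ ω, ((cluster E ω x).encard : ℝ≥0∞) ∂(P r)
      = ∫⁻ ω, ∑' y : V, (if ConnIn E ω Set.univ x y then (1:ℝ≥0∞) else 0) ∂(P r) := by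
        exact lintegral_congr hpt
    _ = ∑' y : V, ∫⁻ ω, (if ConnIn E ω Set.univ x y then (1:ℝ≥0∞) else 0) ∂(P r) := by
        refine lintegral_tsum fun y => ?_
        have : (fun ω => (if ConnIn E ω Set.univ x y then (1:ℝ≥0∞) else 0)) =
            Set.indicator {ω : Config V | ConnIn E ω Set.univ x y} (fun _ => 1) := by
          funext ω
          simp [Set.indicator_apply]
        rw [this]
        exact ((measurable_const.indicator (conn_measurable hlf))).aemeasurable
    _ = ∑' y : V, P r {ω : Config V | ConnIn E ω Set.univ x y} := by
        refine tsum_congr fun y => ?_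
        have : (fun ω => (if ConnIn E ω Set.univ x y then (1:ℝ≥0∞) else 0)) =
            Set.indicator {ω : Config V | ConnIn E ω Set.univ x y} (fun _ => 1) := by
          funext ω
          simp [Set.indicator_apply]
        rw [this]
        exact lintegral_indicator_one (conn_measurable hlf)
    _ = ⨆ T : Finset V, ∑ y ∈ T, P r {ω : Config V | ConnIn E ω Set.univ x y} :=
        ENNReal.tsum_eq_iSup_sum
    _ ≤ (M : ℝ≥0∞) * (1 - δ)⁻¹ := iSup_le fun T => hsum_conn x T

end Chi

section Final

variable {E : Fin N → Set (Sym2 V)} {P : (Fin N → ℝ) → Measure (Config V)}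

lemma pFull_mem {p : Fin (N - 1) → ℝ} {q : ℝ} (hp : ∀ i, p i ∈ Icc (0:ℝ) 1)
    (hq : q ∈ Icc (0:ℝ) 1) : ∀ i, pFull N p q i ∈ Icc (0:ℝ) 1 := by
  intro i
  rw [pFull]
  split
  · exact hp _
  · exact hq

lemma pFull_le {p : Fin (N - 1) → ℝ} {q q' : ℝ} (hqq' : q ≤ q') :
    ∀ i, pFull N p q i ≤ pFull N p q' i := by
  intro i
  rw [pFull, pFull]
  split
  · exact le_refl _
  · exact hqq'

lemma chi_lt_top_main [Countable V] [Infinite V]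
    (hdisj : DisjointColours E) (hlf : LocFin E) (hqt : QuasiTransitive E)
    (hP : IsPercFamily E P) {r : Fin N → ℝ} (hr : ∀ i, r i ∈ Icc (0:ℝ) 1)
    (hgood : ∀ x : V, ∃ S : Finset V, x ∈ S ∧ psi E P r x S < 1) :
    chi E P r < ⊤ := by
  -- choose a good set for every vertex
  have hSx : ∀ x : V, ∃ S : Finset V, x ∈ S ∧ psi E P r x S < 1 := hgood
  set Sx : V → Finset V := fun x => (hSx x).choose with hSxdef
  have hxS : ∀ x, x ∈ Sx x := fun x => (hSx x).choose_spec.1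
  have hψlt : ∀ x, psi E P r x (Sx x) < 1 := fun x => (hSx x).choose_spec.2
  obtain ⟨k, c, hc⟩ := hqt
  have v₀ : V := Classical.arbitrary V
  haveI : Nonempty (Fin k) := ⟨c v₀⟩
  set g : Fin k → V := fun i => if h : ∃ v : V, c v = i then h.choose else v₀ with hgdef
  have hgc : ∀ w : V, c (g (c w)) = c w := by
    intro w
    have hex : ∃ v : V, c v = c w := ⟨w, rfl⟩
    simp only [hgdef, dif_pos hex]
    exact hex.choose_spec
  set M : ℕ := Finset.univ.sup (fun i : Fin k => (Sx (g i)).card) with hMdef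
  have hM1 : 1 ≤ M := by
    obtain ⟨i₀⟩ := (inferInstance : Nonempty (Fin k))
    refine le_trans ?_ (Finset.le_sup (Finset.mem_univ i₀))
    exact Finset.card_pos.mpr ⟨g i₀, hxS (g i₀)⟩
  set δ : ℝ≥0∞ := Finset.univ.sup (fun i : Fin k => psi E P r (g i) (Sx (g i))) with hδdef
  have hδlt : δ < 1 := by
    rw [hδdef]
    refine Finset.sup_lt_iff (by simp) |>.mpr ?_
    intro i _
    exact hψlt (g i)
  -- a uniform family via automorphisms
  have hexists : ∀ w : V, ∃ S' : Finset V,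
      w ∈ S' ∧ S'.card ≤ M ∧ psi E P r w S' ≤ δ := by
    intro w
    obtain ⟨f, hfE, hfw⟩ := hc w (g (c w)) (hgc w).symm
    refine ⟨(Sx (g (c w))).image f, ?_, ?_, ?_⟩
    · have hmem : f (g (c w)) ∈ (Sx (g (c w))).image f :=
        Finset.mem_image_of_mem f (hxS (g (c w)))
      rwa [hfw] at hmem
    · rw [Finset.card_image_of_injective _ f.injective, hMdef]
      exact Finset.le_sup (f := fun i : Fin k => (Sx (g i)).card) (Finset.mem_univ (c w))
    · have hpsieq := psi_map hP hr hfE (g (c w)) (Sx (g (c w)))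
      rw [hfw] at hpsieq
      rw [hpsieq, hδdef]
      exact Finset.le_sup (f := fun i : Fin k => psi E P r (g i) (Sx (g i)))
        (Finset.mem_univ (c w))
  set Sx' : V → Finset V := fun w => (hexists w).choose with hSx'def
  have h1 : ∀ w, w ∈ Sx' w := fun w => (hexists w).choose_spec.1
  have h2 : ∀ w, (Sx' w).card ≤ M := fun w => (hexists w).choose_spec.2.1
  have h3 : ∀ w, psi E P r w (Sx' w) ≤ δ := fun w => (hexists w).choose_spec.2.2
  have hbound := chi_le_of_uniform hP hr hlf M hM1 δ hδlt Sx' h1 h2 h3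
  refine lt_of_le_of_lt hbound ?_
  refine ENNReal.mul_lt_top (ENNReal.natCast_lt_top M) ?_
  rw [ENNReal.inv_lt_top]
  exact tsub_pos_iff_lt.mpr hδlt

end Final

/-- If `q < q_ψ(p)` then `χ(p,q) < ∞`; consequently `q_ψ(p) ≤ q_χ(p)`. -/
theorem qPsi_le_qChi
    {V : Type*} [Countable V] [Infinite V] {N : ℕ} (hN : 0 < N)
    (E : Fin N → Set (Sym2 V))
    (hdisj : DisjointColours E) (hloops : NoLoops E)
    (hlf : LocFin E) (hconn : ConnectedGraph E) (hqt : QuasiTransitive E)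
    (P : (Fin N → ℝ) → Measure (Config V)) (hP : IsPercFamily E P)
    (p : Fin (N - 1) → ℝ) (hp : ∀ i, p i ∈ Icc (0 : ℝ) 1) :
    (∀ q : ℝ, 0 ≤ q → q < qPsi E P p → chi E P (pFull N p q) < ⊤) ∧
      qPsi E P p ≤ qChi E P p := by
  set Tψ : Set ℝ := {q | q ∈ Icc (0 : ℝ) 1 ∧
    ∀ x : V, ∃ S : Finset V, x ∈ S ∧ psi E P (pFull N p q) x S < 1} with hTψ
  have hqPsi : qPsi E P p = sSup Tψ := rfl
  have part1 : ∀ q : ℝ, 0 ≤ q → q < qPsi E P p → chi E P (pFull N p q) < ⊤ := by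
    intro q hq0 hqlt
    rw [hqPsi] at hqlt
    have hTne : Tψ.Nonempty := by
      by_contra h
      rw [Set.not_nonempty_iff_eq_empty] at h
      rw [h, Real.sSup_empty] at hqlt
      exact absurd (hq0.trans_lt hqlt) (lt_irrefl _)
    obtain ⟨q', hq'T, hqq'⟩ := exists_lt_of_lt_csSup hTne hqlt
    obtain ⟨hq'Icc, hgood'⟩ := hq'T
    have hqIcc : q ∈ Icc (0:ℝ) 1 := ⟨hq0, hqq'.le.trans hq'Icc.2⟩
    have hgood : ∀ x : V, ∃ S : Finset V, x ∈ S ∧ psi E P (pFull N p q) x S < 1 := by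
      intro x
      obtain ⟨S, hxS, hlt⟩ := hgood' x
      refine ⟨S, hxS, lt_of_le_of_lt ?_ hlt⟩
      exact psi_mono_param hdisj hP (pFull_mem hp hqIcc) (pFull_mem hp hq'Icc)
        (pFull_le hqq'.le) x S
    exact chi_lt_top_main hdisj hlf hqt hP (pFull_mem hp hqIcc) hgood
  refine ⟨part1, ?_⟩
  have hqPsi_le_one : qPsi E P p ≤ 1 := by
    rw [hqPsi]
    rcases Set.eq_empty_or_nonempty Tψ with h | h
    · rw [h, Real.sSup_empty]; norm_num
    · exact csSup_le h (fun q hq => hq.1.2)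
  refine le_csInf ⟨1, Set.mem_insert 1 _⟩ ?_
  rintro b (rfl | hb)
  · exact hqPsi_le_one
  · obtain ⟨hbIcc, hbchi⟩ := hb
    by_contra hlt
    push_neg at hlt
    exact absurd hbchi (part1 b hbIcc.1 hlt).ne

end InhomPerc
end

section
/- Let G = (V, E_1, …, E_N) be an infinite, locally finite, connected edge-coloured graph with N colours, and fix p ∈ [0,1]^{N−1} and q ∈ [0,1]. Let x ∈ V, let S ⊆ V be finite with x ∈ S, and let A ⊆ V be finite. Then Σ_{u∈A} P_{p,q}(x ↔_A u) ≤ |S| + ψ_{p,q}(x,S) · χ(A), where χ(A) := sup_{w∈V} Σ_{v∈A} P_{p,q}(w ↔_A v). -/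
open MeasureTheory ENNReal Set
open scoped Classical

namespace InhomPerc

variable {V : Type*} {N : ℕ}

section Aux

variable {V : Type*} {N : ℕ}

/-! ### Cylinder events and independence -/

/-- The canonical configuration opening exactly the edges of `s`. -/
noncomputable def cfg (s : Finset (Sym2 V)) : Config V := fun e => if e ∈ s then true else false

/-- The cylinder event prescribing the states of the edges in `T`. -/
def cylEv (T : Finset (Sym2 V)) (σ : Sym2 V → Bool) : Set (Config V) :=
  {ω | ∀ e ∈ T, ω e = σ e}

/-- An event is determined by the set of edges `T`. -/
def DetBy (T : Set (Sym2 V)) (Ev : Set (Config V)) : Prop :=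
  ∀ ω ω' : Config V, (∀ e ∈ T, ω e = ω' e) → ω ∈ Ev → ω' ∈ Ev

lemma DetBy.mono {T T' : Set (Sym2 V)} {Ev : Set (Config V)} (h : DetBy T Ev) (hT : T ⊆ T') :
    DetBy T' Ev := fun ω ω' hag => h ω ω' (fun e he => hag e (hT he))

lemma DetBy.inter {T₁ T₂ : Set (Sym2 V)} {Ev₁ Ev₂ : Set (Config V)}
    (h₁ : DetBy T₁ Ev₁) (h₂ : DetBy T₂ Ev₂) : DetBy (T₁ ∪ T₂) (Ev₁ ∩ Ev₂) := by
  intro ω ω' hag hω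
  exact ⟨h₁ ω ω' (fun e he => hag e (Or.inl he)) hω.1,
         h₂ ω ω' (fun e he => hag e (Or.inr he)) hω.2⟩

lemma measurableSet_cylEv (T : Finset (Sym2 V)) (σ : Sym2 V → Bool) :
    MeasurableSet (cylEv T σ) := by
  have h : cylEv T σ = ⋂ e ∈ (T : Set (Sym2 V)), (fun ω : Config V => ω e) ⁻¹' {σ e} := by
    ext ω; simp [cylEv]
  rw [h]
  exact MeasurableSet.biInter T.countable_toSet fun e _ =>
    measurable_pi_apply e (measurableSet_singleton _)

lemma det_rep {T : Finset (Sym2 V)} {Ev : Set (Config V)} (h : DetBy ↑T Ev) :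
    Ev = ⋃ s ∈ T.powerset.filter (fun s => cfg s ∈ Ev), cylEv T (cfg s) := by
  ext ω
  simp only [Set.mem_iUnion, Finset.mem_filter, Finset.mem_powerset, exists_prop]
  constructor
  · intro hω
    have hag : ∀ e ∈ (T : Set (Sym2 V)), ω e = cfg (T.filter (fun e => ω e = true)) e := by
      intro e he
      simp only [cfg, Finset.mem_filter]
      cases hh : ω e <;> simp [hh, Finset.mem_coe.mp he]
    exact ⟨T.filter (fun e => ω e = true), ⟨Finset.filter_subset _ _, h ω _ hag hω⟩,
      fun e he => hag e (Finset.mem_coe.mpr he)⟩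
  · rintro ⟨s, ⟨hsT, hs⟩, hc⟩
    exact h (cfg s) ω (fun e he => (hc e he).symm) hs

lemma det_measurableSet {T : Finset (Sym2 V)} {Ev : Set (Config V)} (h : DetBy ↑T Ev) :
    MeasurableSet Ev := by
  rw [det_rep h]
  exact (T.powerset.filter _).measurableSet_biUnion fun s _ => measurableSet_cylEv _ _

lemma cylEv_disjoint {T s t : Finset (Sym2 V)} (hs : s ⊆ T) (ht : t ⊆ T) (hne : s ≠ t) :
    Disjoint (cylEv T (cfg s)) (cylEv T (cfg t)) := by
  rw [Set.disjoint_left]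
  intro ω hωs hωt
  apply hne
  ext e
  by_cases heT : e ∈ T
  · have h1 := hωs e heT
    have h2 := hωt e heT
    rw [h1] at h2
    by_cases e1 : e ∈ s <;> by_cases e2 : e ∈ t <;> simp_all [cfg]
  · exact ⟨fun h1 => absurd (hs h1) heT, fun h1 => absurd (ht h1) heT⟩

lemma measure_det_inter (μ : Measure (Config V)) {T : Finset (Sym2 V)} {Ev : Set (Config V)}
    (h : DetBy ↑T Ev) {B : Set (Config V)} (hB : MeasurableSet B) :
    μ (Ev ∩ B) = ∑ s ∈ T.powerset.filter (fun s => cfg s ∈ Ev), μ (cylEv T (cfg s) ∩ B) := by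
  conv_lhs => rw [det_rep h, Set.iUnion₂_inter]
  refine measure_biUnion_finset ?_ fun s _ => (measurableSet_cylEv _ _).inter hB
  intro s hs t ht hne
  simp only [Finset.coe_filter, Set.mem_setOf_eq, Finset.mem_powerset] at hs ht
  exact (cylEv_disjoint hs.1 ht.1 hne).mono Set.inter_subset_left Set.inter_subset_left

lemma measure_det (μ : Measure (Config V)) {T : Finset (Sym2 V)} {Ev : Set (Config V)}
    (h : DetBy ↑T Ev) :
    μ Ev = ∑ s ∈ T.powerset.filter (fun s => cfg s ∈ Ev), μ (cylEv T (cfg s)) := by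
  have := measure_det_inter μ h MeasurableSet.univ
  simpa using this

lemma cfg_union_agree {T₁ T₂ s₁ s₂ : Finset (Sym2 V)} (hd : Disjoint T₁ T₂)
    (hs₁ : s₁ ⊆ T₁) (hs₂ : s₂ ⊆ T₂) :
    (∀ e ∈ T₁, cfg (s₁ ∪ s₂) e = cfg s₁ e) ∧ (∀ e ∈ T₂, cfg (s₁ ∪ s₂) e = cfg s₂ e) := by
  constructor
  · intro e he
    have : e ∉ s₂ := fun h => (Finset.disjoint_left.mp hd he) (hs₂ h)
    simp [cfg, Finset.mem_union, this]
  · intro e he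
    have : e ∉ s₁ := fun h => (Finset.disjoint_left.mp hd (hs₁ h)) he
    simp [cfg, Finset.mem_union, this]

lemma cylEv_inter {T₁ T₂ s₁ s₂ : Finset (Sym2 V)} (hd : Disjoint T₁ T₂)
    (hs₁ : s₁ ⊆ T₁) (hs₂ : s₂ ⊆ T₂) :
    cylEv T₁ (cfg s₁) ∩ cylEv T₂ (cfg s₂) = cylEv (T₁ ∪ T₂) (cfg (s₁ ∪ s₂)) := by
  obtain ⟨h1, h2⟩ := cfg_union_agree hd hs₁ hs₂
  ext ω
  simp only [cylEv, Set.mem_inter_iff, Set.mem_setOf_eq, Finset.mem_union]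
  constructor
  · rintro ⟨ha, hb⟩ e he
    rcases he with he | he
    · rw [h1 e he]; exact ha e he
    · rw [h2 e he]; exact hb e he
  · intro hab
    exact ⟨fun e he => (hab e (Or.inl he)).trans (h1 e he),
           fun e he => (hab e (Or.inr he)).trans (h2 e he)⟩

end Aux


section Aux2

variable {V : Type*} {N : ℕ}

/-- Product structure of the percolation measure over disjoint cylinders. -/
lemma mu_cyl_union {E : Fin N → Set (Sym2 V)} {μ : Measure (Config V)} {r : Fin N → ℝ}
    (hcyl : ∀ (F : Finset (Sym2 V)) (σ : Sym2 V → Bool),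
      μ {ω | ∀ e ∈ F, ω e = σ e} =
        ∏ e ∈ F, ENNReal.ofReal (if σ e then edgeProb E r e else 1 - edgeProb E r e))
    {T₁ T₂ s₁ s₂ : Finset (Sym2 V)} (hd : Disjoint T₁ T₂) (hs₁ : s₁ ⊆ T₁) (hs₂ : s₂ ⊆ T₂) :
    μ (cylEv (T₁ ∪ T₂) (cfg (s₁ ∪ s₂))) = μ (cylEv T₁ (cfg s₁)) * μ (cylEv T₂ (cfg s₂)) := by
  obtain ⟨h1, h2⟩ := cfg_union_agree hd hs₁ hs₂
  have key : ∀ (T : Finset (Sym2 V)) (σ : Sym2 V → Bool), μ (cylEv T σ) =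
      ∏ e ∈ T, ENNReal.ofReal (if σ e then edgeProb E r e else 1 - edgeProb E r e) :=
    fun T σ => hcyl T σ
  rw [key, key, key, Finset.prod_union hd]
  congr 1
  · exact Finset.prod_congr rfl fun e he => by rw [h1 e he]
  · exact Finset.prod_congr rfl fun e he => by rw [h2 e he]

/-- Independence of events determined by disjoint (finite) edge sets. -/
lemma indep2 {E : Fin N → Set (Sym2 V)} {μ : Measure (Config V)} {r : Fin N → ℝ}
    (hcyl : ∀ (F : Finset (Sym2 V)) (σ : Sym2 V → Bool),
      μ {ω | ∀ e ∈ F, ω e = σ e} =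
        ∏ e ∈ F, ENNReal.ofReal (if σ e then edgeProb E r e else 1 - edgeProb E r e))
    {T₁ T₂ : Finset (Sym2 V)} (hd : Disjoint T₁ T₂) {Ev₁ Ev₂ : Set (Config V)}
    (h₁ : DetBy ↑T₁ Ev₁) (h₂ : DetBy ↑T₂ Ev₂) :
    μ (Ev₁ ∩ Ev₂) = μ Ev₁ * μ Ev₂ := by
  rw [measure_det_inter μ h₁ (det_measurableSet h₂), measure_det μ h₁, Finset.sum_mul]
  refine Finset.sum_congr rfl fun s₁ hs₁ => ?_
  have hs₁T : s₁ ⊆ T₁ := Finset.mem_powerset.mp (Finset.mem_filter.mp hs₁).1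
  rw [Set.inter_comm, measure_det_inter μ h₂ (measurableSet_cylEv T₁ (cfg s₁)),
      measure_det μ h₂, Finset.mul_sum]
  refine Finset.sum_congr rfl fun s₂ hs₂ => ?_
  have hs₂T : s₂ ⊆ T₂ := Finset.mem_powerset.mp (Finset.mem_filter.mp hs₂).1
  rw [Set.inter_comm, cylEv_inter hd hs₁T hs₂T, mu_cyl_union hcyl hd hs₁T hs₂T, mul_comm]

/-! ### Graph lemmas -/

lemma connIn_mono {E : Fin N → Set (Sym2 V)} {ω : Config V} {S₁ S₂ : Set V} (h : S₁ ⊆ S₂)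
    {x y : V} (hc : ConnIn E ω S₁ x y) : ConnIn E ω S₂ x y := by
  induction hc with
  | refl => exact Relation.ReflTransGen.refl
  | tail _ h2 ih => exact ih.tail ⟨h h2.1, h h2.2.1, h2.2.2⟩

lemma connIn_mem {E : Fin N → Set (Sym2 V)} {ω : Config V} {S : Set V} {x y : V}
    (hx : x ∈ S) (hc : ConnIn E ω S x y) : y ∈ S := by
  induction hc with
  | refl => exact hx
  | tail _ h2 _ => exact h2.2.1

/-- The event `x ↔_S y` is determined by the edges inside `S`. -/
lemma connIn_detBy (E : Fin N → Set (Sym2 V)) (S : Set V) (x y : V) :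
    DetBy {e | e ∈ Eset E ∧ ∀ v ∈ e, v ∈ S} {ω | ConnIn E ω S x y} := by
  intro ω ω' hag hc
  simp only [Set.mem_setOf_eq] at hc ⊢
  induction hc with
  | refl => exact Relation.ReflTransGen.refl
  | @tail b c _ h2 ih =>
    refine ih.tail ⟨h2.1, h2.2.1, h2.2.2.1, ?_⟩
    rw [← hag s(b, c) ⟨h2.2.2.1, ?_⟩]
    · exact h2.2.2.2
    · intro v hv
      rcases Sym2.mem_iff.mp hv with rfl | rfl
      exacts [h2.1, h2.2.1]

/-- The event "the open cluster of `x` inside `S` equals `C`". -/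
def clusterEv (E : Fin N → Set (Sym2 V)) (S : Set V) (x : V) (C : Finset V) : Set (Config V) :=
  {ω | ∀ y, ConnIn E ω S x y ↔ y ∈ C}

/-- Edges inside `S` with at least one endpoint in `C`. -/
def touchEdges (E : Fin N → Set (Sym2 V)) (S : Set V) (C : Set V) : Set (Sym2 V) :=
  {e | e ∈ Eset E ∧ (∀ v ∈ e, v ∈ S) ∧ ∃ v ∈ e, v ∈ C}

lemma clusterEv_detBy (E : Fin N → Set (Sym2 V)) (S : Set V) (x : V) (C : Finset V) :
    DetBy (touchEdges E S ↑C) (clusterEv E S x C) := by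
  intro ω ω' hag hω
  have fwd : ∀ y, ConnIn E ω' S x y → y ∈ C := by
    intro y hy
    induction hy with
    | refl => exact (hω x).mp Relation.ReflTransGen.refl
    | @tail b c _ h2 ih =>
      have hmem : ∀ v ∈ s(b, c), v ∈ S := by
        intro v hv; rcases Sym2.mem_iff.mp hv with rfl | rfl; exacts [h2.1, h2.2.1]
      have hedge : s(b, c) ∈ touchEdges E S ↑C :=
        ⟨h2.2.2.1, hmem, b, Sym2.mem_mk_left b c, ih⟩
      have hopen' : ω s(b, c) = true := by rw [hag _ hedge]; exact h2.2.2.2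
      exact (hω c).mp (((hω b).mpr ih).tail ⟨h2.1, h2.2.1, h2.2.2.1, hopen'⟩)
  have bwd : ∀ y, ConnIn E ω S x y → ConnIn E ω' S x y := by
    intro y hy
    induction hy with
    | refl => exact Relation.ReflTransGen.refl
    | @tail b c hxb h2 ih =>
      have hbC : b ∈ C := (hω b).mp hxb
      have hmem : ∀ v ∈ s(b, c), v ∈ S := by
        intro v hv; rcases Sym2.mem_iff.mp hv with rfl | rfl; exacts [h2.1, h2.2.1]
      have hedge : s(b, c) ∈ touchEdges E S ↑C :=
        ⟨h2.2.2.1, hmem, b, Sym2.mem_mk_left b c, hbC⟩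
      have hopen' : ω' s(b, c) = true := by rw [← hag _ hedge]; exact h2.2.2.2
      exact ih.tail ⟨h2.1, h2.2.1, h2.2.2.1, hopen'⟩
  exact fun y => ⟨fwd y, fun hyC => bwd y ((hω y).mpr hyC)⟩

lemma clusterEv_disjoint {E : Fin N → Set (Sym2 V)} {S : Set V} {x : V} {C C' : Finset V}
    (h : C ≠ C') : Disjoint (clusterEv E S x C) (clusterEv E S x C') := by
  rw [Set.disjoint_left]
  intro ω hC hC'
  exact h (Finset.ext fun y => ((hC y).symm.trans (hC' y)))

lemma clusterEv_cover (E : Fin N → Set (Sym2 V)) (S : Finset V) (x : V) (hx : x ∈ S)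
    (ω : Config V) :
    ω ∈ clusterEv E ↑S x (S.filter (fun y => ConnIn E ω ↑S x y)) := by
  intro y
  constructor
  · intro h
    exact Finset.mem_filter.mpr ⟨connIn_mem (Finset.mem_coe.mpr hx) h, h⟩
  · intro h
    exact (Finset.mem_filter.mp h).2

/-- Last-exit decomposition. -/
lemma lastExit {E : Fin N → Set (Sym2 V)} {ω : Config V} {S A C : Finset V} {x u : V}
    (hx : x ∈ S) (hω : ω ∈ clusterEv E ↑S x C) (hu : ConnIn E ω ↑A x u) (huS : u ∉ S) :
    ∃ a ∈ C, ∃ b ∈ A, b ∉ S ∧ s(a, b) ∈ Eset E ∧ ω s(a, b) = true ∧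
      ConnIn E ω (↑A \ ↑C) b u := by
  have main : ∀ y, ConnIn E ω ↑A x y → y ∈ C ∨
      ∃ a ∈ C, ∃ b ∈ A, b ∉ S ∧ s(a, b) ∈ Eset E ∧ ω s(a, b) = true ∧
        ConnIn E ω (↑A \ ↑C) b y := by
    intro y hy
    induction hy with
    | refl => exact Or.inl ((hω x).mp Relation.ReflTransGen.refl)
    | @tail b c hxb h2 ih =>
      by_cases hcC : c ∈ C
      · exact Or.inl hcC
      · by_cases hbC : b ∈ C
        · -- the step (b, c) is the exit edge
          have hbS : b ∈ S := connIn_mem (Finset.mem_coe.mpr hx) ((hω b).mpr hbC)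
          have hcS : c ∉ S := by
            intro hcS
            exact hcC ((hω c).mp (((hω b).mpr hbC).tail
              ⟨hbS, Finset.mem_coe.mpr hcS, h2.2.2.1, h2.2.2.2⟩))
          exact Or.inr ⟨b, hbC, c, Finset.mem_coe.mp h2.2.1, hcS, h2.2.2.1, h2.2.2.2,
            Relation.ReflTransGen.refl⟩
        · -- extend the tail path
          rcases ih with hbC' | ⟨a, haC, b₀, hb₀A, hb₀S, he, hop, hpath⟩
          · exact absurd hbC' hbC
          · exact Or.inr ⟨a, haC, b₀, hb₀A, hb₀S, he, hop,
              hpath.tail ⟨⟨h2.1, hbC⟩, ⟨h2.2.1, hcC⟩, h2.2.2.1, h2.2.2.2⟩⟩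
  rcases main u hu with huC | hw
  · exact absurd (connIn_mem (Finset.mem_coe.mpr hx) ((hω u).mpr huC)) huS
  · exact hw

/-- Edges all of whose endpoints lie in a finite set form a finite set. -/
lemma inEdges_finite {E : Fin N → Set (Sym2 V)} (hlf : LocFin E) (S : Finset V) :
    {e | e ∈ Eset E ∧ ∀ v ∈ e, v ∈ (S : Set V)}.Finite := by
  apply Set.Finite.subset (Set.Finite.biUnion S.finite_toSet (fun v _ => hlf v))
  intro e he
  induction e with
  | _ a b =>
    exact Set.mem_biUnion (he.2 a (Sym2.mem_mk_left a b)) ⟨he.1, Sym2.mem_mk_left a b⟩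

end Aux2

/-- `Σ_{u∈A} P(x ↔_A u) ≤ |S| + ψ(x,S) · χ(A)` where
`χ(A) = sup_w Σ_{v∈A} P(w ↔_A v)`. -/
theorem restricted_sum_bound
    {V : Type*} [Countable V] [Infinite V] {N : ℕ} (hN : 0 < N)
    (E : Fin N → Set (Sym2 V))
    (hdisj : DisjointColours E) (hloops : NoLoops E)
    (hlf : LocFin E) (hconn : ConnectedGraph E)
    (P : (Fin N → ℝ) → Measure (Config V)) (hP : IsPercFamily E P)
    (p : Fin (N - 1) → ℝ) (hp : ∀ i, p i ∈ Icc (0 : ℝ) 1)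
    (q : ℝ) (hq : q ∈ Icc (0 : ℝ) 1)
    (x : V) (S : Finset V) (hxS : x ∈ S) (A : Finset V) :
    ∑ u ∈ A, P (pFull N p q) {ω | ConnIn E ω ↑A x u} ≤
      (S.card : ℝ≥0∞) +
        psi E P (pFull N p q) x S *
          ⨆ w : V, ∑ v ∈ A, P (pFull N p q) {ω | ConnIn E ω ↑A w v} := by
  classical
  set r : Fin N → ℝ := pFull N p q with hr_def
  have hr : ∀ i, r i ∈ Icc (0 : ℝ) 1 := by
    intro i
    by_cases h : (i : ℕ) < N - 1 <;> simp only [hr_def, pFull, h, dite_true, dite_false,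
      dif_pos, dif_neg, not_false_iff]
    · exact hp _
    · exact hq
  set μ : Measure (Config V) := P r with hμ_def
  have hprob : IsProbabilityMeasure μ := (hP r hr).1
  have hcyl := (hP r hr).2
  have hopen : ∀ e : Sym2 V, μ {ω | ω e = true} = ENNReal.ofReal (edgeProb E r e) := by
    intro e
    have h := hcyl {e} (fun _ => true)
    simpa using h
  have hTC : ∀ C : Finset V, (touchEdges E ↑S ↑C).Finite := fun C =>
    (inEdges_finite hlf S).subset (fun e he => ⟨he.1, he.2.1⟩)
  have hT3 : ∀ C : Finset V, {e | e ∈ Eset E ∧ ∀ v ∈ e, v ∈ (↑A \ ↑C : Set V)}.Finite :=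
    fun C => (inEdges_finite hlf A).subset (fun e he => ⟨he.1, fun v hv => (he.2 v hv).1⟩)
  have hdetC : ∀ C : Finset V, DetBy ↑(hTC C).toFinset (clusterEv E ↑S x C) := by
    intro C
    rw [Set.Finite.coe_toFinset]
    exact clusterEv_detBy E ↑S x C
  set χ := ⨆ w : V, ∑ v ∈ A, μ {ω | ConnIn E ω ↑A w v} with hχ_def
  have hχ_le : ∀ b : V,
      ∑ u ∈ A.filter (fun u => ¬ u ∈ S), μ {ω | ConnIn E ω ↑A b u} ≤ χ := by
    intro b
    refine le_trans ?_ (le_iSup (fun w => ∑ v ∈ A, μ {ω | ConnIn E ω ↑A w v}) b)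
    exact Finset.sum_le_sum_of_subset (Finset.filter_subset _ _)
  -- the per-vertex key bound
  have key : ∀ u ∈ A.filter (fun u => ¬ u ∈ S), μ {ω | ConnIn E ω ↑A x u} ≤
      ∑ C ∈ S.powerset, ∑ ab ∈ C ×ˢ (A \ S),
        μ (clusterEv E ↑S x C) * ENNReal.ofReal (edgeProb E r s(ab.1, ab.2)) *
          μ {ω | ConnIn E ω ↑A ab.2 u} := by
    intro u hu
    obtain ⟨huA, huS⟩ := Finset.mem_filter.mp hu
    have cover : {ω : Config V | ConnIn E ω ↑A x u} ⊆
        ⋃ C ∈ S.powerset, (clusterEv E ↑S x C ∩ {ω | ConnIn E ω ↑A x u}) := by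
      intro ω hω
      exact Set.mem_iUnion₂.mpr ⟨S.filter (fun y => ConnIn E ω ↑S x y),
        Finset.mem_powerset.mpr (Finset.filter_subset _ _),
        clusterEv_cover E S x hxS ω, hω⟩
    refine le_trans (le_trans (measure_mono cover) (measure_biUnion_finset_le _ _)) ?_
    refine Finset.sum_le_sum fun C hC => ?_
    have sub2 : clusterEv E ↑S x C ∩ {ω : Config V | ConnIn E ω ↑A x u} ⊆
        ⋃ ab ∈ C ×ˢ (A \ S), (clusterEv E ↑S x C ∩
          ({ω : Config V | ω s(ab.1, ab.2) = true} ∩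
            {ω : Config V | ConnIn E ω (↑A \ ↑C) ab.2 u})) := by
      rintro ω ⟨hω1, hω2⟩
      obtain ⟨a, haC, b, hbA, hbS, he, hop, hpath⟩ := lastExit hxS hω1 hω2 huS
      exact Set.mem_iUnion₂.mpr ⟨(a, b),
        Finset.mem_product.mpr ⟨haC, Finset.mem_sdiff.mpr ⟨hbA, hbS⟩⟩, hω1, hop, hpath⟩
    refine le_trans (le_trans (measure_mono sub2) (measure_biUnion_finset_le _ _)) ?_
    refine Finset.sum_le_sum fun ab hab => ?_
    obtain ⟨haC, hb⟩ := Finset.mem_product.mp hab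
    obtain ⟨hbA, hbS⟩ := Finset.mem_sdiff.mp hb
    set a := ab.1
    set b := ab.2
    -- determining edge sets
    set T₁ : Finset (Sym2 V) := (hTC C).toFinset with hT₁_def
    set T₂ : Finset (Sym2 V) := {s(a, b)} with hT₂_def
    set T₃ : Finset (Sym2 V) := (hT3 C).toFinset with hT₃_def
    have hdet2 : DetBy ↑T₂ {ω : Config V | ω s(a, b) = true} := by
      intro ω ω' hag hω
      simp only [Set.mem_setOf_eq] at hω ⊢
      rw [← hag s(a, b) (by simp [hT₂_def])]
      exact hω
    have hdet3 : DetBy ↑T₃ {ω : Config V | ConnIn E ω (↑A \ ↑C) b u} := by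
      rw [hT₃_def, Set.Finite.coe_toFinset]
      exact connIn_detBy E _ b u
    have hd12 : Disjoint T₁ T₂ := by
      rw [Finset.disjoint_right]
      intro e he
      rw [hT₂_def, Finset.mem_singleton] at he
      subst he
      rw [hT₁_def, Set.Finite.mem_toFinset]
      rintro ⟨-, hS', -⟩
      exact hbS (hS' b (Sym2.mem_mk_right a b))
    have hd13 : Disjoint T₁ T₃ := by
      rw [Finset.disjoint_left]
      intro e he1 he3
      rw [hT₁_def, Set.Finite.mem_toFinset] at he1
      rw [hT₃_def, Set.Finite.mem_toFinset] at he3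
      obtain ⟨-, -, v, hv, hvC⟩ := he1
      exact (he3.2 v hv).2 hvC
    have hd23 : Disjoint T₂ T₃ := by
      rw [Finset.disjoint_left]
      intro e he2 he3
      rw [hT₂_def, Finset.mem_singleton] at he2
      subst he2
      rw [hT₃_def, Set.Finite.mem_toFinset] at he3
      exact (he3.2 a (Sym2.mem_mk_left a b)).2 haC
    have hdet23 : DetBy ↑(T₂ ∪ T₃)
        ({ω : Config V | ω s(a, b) = true} ∩ {ω : Config V | ConnIn E ω (↑A \ ↑C) b u}) := by
      have := hdet2.inter hdet3
      rwa [← Finset.coe_union] at this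
    have hEq : μ (clusterEv E ↑S x C ∩ ({ω : Config V | ω s(a, b) = true} ∩
          {ω : Config V | ConnIn E ω (↑A \ ↑C) b u})) =
        μ (clusterEv E ↑S x C) * (μ {ω : Config V | ω s(a, b) = true} *
          μ {ω : Config V | ConnIn E ω (↑A \ ↑C) b u}) := by
      rw [indep2 hcyl (Finset.disjoint_union_right.mpr ⟨hd12, hd13⟩) (hdetC C) hdet23,
        indep2 hcyl hd23 hdet2 hdet3]
    rw [hEq, hopen s(a, b), ← mul_assoc]
    refine mul_le_mul_right (measure_mono ?_) _
    intro ω hω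
    exact connIn_mono Set.diff_subset hω
  -- split the total sum
  rw [show (∑ u ∈ A, μ {ω | ConnIn E ω ↑A x u}) =
      (∑ u ∈ A.filter (fun u => u ∈ S), μ {ω | ConnIn E ω ↑A x u}) +
      (∑ u ∈ A.filter (fun u => ¬ u ∈ S), μ {ω | ConnIn E ω ↑A x u}) from
    (Finset.sum_filter_add_sum_filter_not A _ _).symm]
  refine add_le_add ?_ ?_
  · calc ∑ u ∈ A.filter (fun u => u ∈ S), μ {ω | ConnIn E ω ↑A x u}
        ≤ ∑ _u ∈ A.filter (fun u => u ∈ S), (1 : ℝ≥0∞) :=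
          Finset.sum_le_sum fun u _ => prob_le_one
      _ = ((A.filter (fun u => u ∈ S)).card : ℝ≥0∞) := by simp
      _ ≤ (S.card : ℝ≥0∞) := by
          exact_mod_cast Nat.cast_le.mpr
            (Finset.card_le_card fun u hu => (Finset.mem_filter.mp hu).2)
  -- the boundary part
  · have hofReal : ∀ e : Sym2 V, ENNReal.ofReal (edgeProb E r e) =
        ∑ i : Fin N, if e ∈ E i then ENNReal.ofReal (r i) else 0 := by
      intro e
      rw [edgeProb, ENNReal.ofReal_sum_of_nonneg]
      · refine Finset.sum_congr rfl fun i _ => ?_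
        split <;> simp
      · intro i _
        split
        · exact (hr i).1
        · exact le_rfl
    have hcl_le : ∀ a ∈ S, (∑ C ∈ S.powerset, if a ∈ C then μ (clusterEv E ↑S x C) else 0) ≤
        μ {ω | ConnIn E ω ↑S x a} := by
      intro a haS
      rw [← Finset.sum_filter,
        ← measure_biUnion_finset (fun C _ C' _ hne => clusterEv_disjoint hne)
          (fun C _ => det_measurableSet (hdetC C))]
      refine measure_mono ?_
      intro ω hω
      obtain ⟨C, hC, hωC⟩ := Set.mem_iUnion₂.mp hω
      exact (hωC a).mpr (Finset.mem_filter.mp hC).2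
    calc ∑ u ∈ A.filter (fun u => ¬ u ∈ S), μ {ω | ConnIn E ω ↑A x u}
        ≤ ∑ u ∈ A.filter (fun u => ¬ u ∈ S), ∑ C ∈ S.powerset, ∑ ab ∈ C ×ˢ (A \ S),
            μ (clusterEv E ↑S x C) * ENNReal.ofReal (edgeProb E r s(ab.1, ab.2)) *
              μ {ω | ConnIn E ω ↑A ab.2 u} := Finset.sum_le_sum key
      _ = ∑ C ∈ S.powerset, ∑ ab ∈ C ×ˢ (A \ S),
            μ (clusterEv E ↑S x C) * ENNReal.ofReal (edgeProb E r s(ab.1, ab.2)) *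
              ∑ u ∈ A.filter (fun u => ¬ u ∈ S), μ {ω | ConnIn E ω ↑A ab.2 u} := by
          rw [Finset.sum_comm]
          refine Finset.sum_congr rfl fun C _ => ?_
          rw [Finset.sum_comm]
          exact Finset.sum_congr rfl fun ab _ => (Finset.mul_sum _ _ _).symm
      _ ≤ ∑ C ∈ S.powerset, ∑ ab ∈ C ×ˢ (A \ S),
            μ (clusterEv E ↑S x C) * ENNReal.ofReal (edgeProb E r s(ab.1, ab.2)) * χ :=
          Finset.sum_le_sum fun C _ => Finset.sum_le_sum fun ab _ =>
            mul_le_mul_right (hχ_le ab.2) _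
      _ = ∑ C ∈ S.powerset, ∑ a ∈ C, μ (clusterEv E ↑S x C) *
            ∑ b ∈ A \ S, ENNReal.ofReal (edgeProb E r s(a, b)) * χ := by
          refine Finset.sum_congr rfl fun C _ => ?_
          rw [Finset.sum_product]
          refine Finset.sum_congr rfl fun a _ => ?_
          rw [Finset.mul_sum]
          exact Finset.sum_congr rfl fun b _ => mul_assoc _ _ _
      _ = ∑ a ∈ S, ∑ C ∈ S.powerset, (if a ∈ C then μ (clusterEv E ↑S x C) *
            ∑ b ∈ A \ S, ENNReal.ofReal (edgeProb E r s(a, b)) * χ else 0) := by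
          refine (Finset.sum_congr rfl fun C hC => ?_).trans Finset.sum_comm
          rw [Finset.sum_ite_mem, Finset.inter_eq_right.mpr (Finset.mem_powerset.mp hC)]
      _ = ∑ a ∈ S, (∑ C ∈ S.powerset, if a ∈ C then μ (clusterEv E ↑S x C) else 0) *
            ∑ b ∈ A \ S, ENNReal.ofReal (edgeProb E r s(a, b)) * χ := by
          refine Finset.sum_congr rfl fun a _ => ?_
          rw [Finset.sum_mul]
          exact Finset.sum_congr rfl fun C _ => by rw [ite_mul, zero_mul]
      _ ≤ ∑ a ∈ S, μ {ω | ConnIn E ω ↑S x a} *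
            ∑ b ∈ A \ S, ENNReal.ofReal (edgeProb E r s(a, b)) * χ :=
          Finset.sum_le_sum fun a ha => mul_le_mul_left (hcl_le a ha) _
      _ = ∑ a ∈ S, ∑ b ∈ A \ S, ∑ i : Fin N,
            ((if s(a, b) ∈ E i then ENNReal.ofReal (r i) else 0) *
              μ {ω | ConnIn E ω ↑S x a}) * χ := by
          refine Finset.sum_congr rfl fun a _ => ?_
          rw [Finset.mul_sum]
          refine Finset.sum_congr rfl fun b _ => ?_
          rw [hofReal s(a, b)]
          conv_rhs => rw [← Finset.sum_mul, ← Finset.sum_mul]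
          ring
      _ = ∑ i : Fin N, ∑ a ∈ S, ∑ b ∈ A \ S,
            ((if s(a, b) ∈ E i then ENNReal.ofReal (r i) else 0) *
              μ {ω | ConnIn E ω ↑S x a}) * χ :=
          (Finset.sum_congr rfl fun a _ => Finset.sum_comm).trans Finset.sum_comm
      _ ≤ ∑ i : Fin N, ∑ y ∈ S, (ENNReal.ofReal (r i) *
            ∑' z : V, (if z ∉ S ∧ s(y, z) ∈ E i then μ {ω | ConnIn E ω ↑S x y} else 0)) * χ := by
          refine Finset.sum_le_sum fun i _ => Finset.sum_le_sum fun a haS => ?_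
          rw [← Finset.sum_mul]
          refine mul_le_mul_left ?_ χ
          calc ∑ b ∈ A \ S, (if s(a, b) ∈ E i then ENNReal.ofReal (r i) else 0) *
                μ {ω | ConnIn E ω ↑S x a}
              = ENNReal.ofReal (r i) * ∑ b ∈ A \ S,
                  (if b ∉ S ∧ s(a, b) ∈ E i then μ {ω | ConnIn E ω ↑S x a} else 0) := by
                rw [Finset.mul_sum]
                refine Finset.sum_congr rfl fun b hb => ?_
                have hbS : b ∉ S := (Finset.mem_sdiff.mp hb).2
                by_cases hE : s(a, b) ∈ E i <;> simp [hE, hbS]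
            _ ≤ _ := mul_le_mul_right (ENNReal.sum_le_tsum _) _
      _ = psi E P r x S * χ := by
          rw [psi, Finset.sum_mul]
          refine Finset.sum_congr rfl fun i _ => ?_
          rw [Finset.mul_sum, Finset.sum_mul]

end InhomPerc
end
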